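/- arXiv:0802.3511 — 7 statements merged into one kernel-verified Lean document; each statement's English description precedes it below -/
import Mathlib

section
/- For every term t of the free algebra F_⊗(V) on one n-ary operation, t is related to its left-most bracketing lmb(t) by the n-Catalan congruence: t ≈ lmb(t). -/
/-- Terms of the free algebra on one `n`-ary operation. -/
inductive CTerm (V : Type*) (n : ℕ) : Type _
  | var : V → CTerm V n
  | op : (Fin n → CTerm V n) → CTerm V n

namespace CTerm

variable {V : Type*} {n : ℕ}

/-- The term `⊗(s_0,…,s_{p-1}, ⊗(s_p,…,s_{p+n-1}), s_{p+n},…,s_{2n-2})`: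
the outer `n`-ary bracketing of the `2n-1` terms `s` with an inner bracket
("pivot") at (0-based) position `p`. -/
def catAt (p : ℕ) (_hp : p < n) (s : Fin (2 * n - 1) → CTerm V n) : CTerm V n :=
  .op fun q =>
    if (q : ℕ) < p then s ⟨q, by have := q.isLt; omega⟩
    else if (q : ℕ) = p then
      .op fun k => s ⟨p + k, by have := q.isLt; have := k.isLt; omega⟩
    else s ⟨(q : ℕ) + n - 1, by have := q.isLt; omega⟩

/-- The underlying list of variables of a term. -/
def U : CTerm V n → List V
  | .var v => [v]
  | .op f => (List.ofFn fun i => U (f i)).flatten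

/-- Left-most bracketing of a nonempty list of terms (head + tail). -/
def lmbAux : CTerm V n → List (CTerm V n) → CTerm V n
  | t, [] => t
  | t, r :: rs =>
    if h : 2 ≤ n ∧ n ≤ rs.length + 2 then
      lmbAux (.op fun i => (t :: r :: rs).getD i t) ((r :: rs).drop (n - 1))
    else t
  termination_by _ l => l.length
  decreasing_by simp [List.length_drop]; omega

/-- Left-most bracketing of a term. -/
def lmb (t : CTerm V n) : CTerm V n :=
  match (U t).map (CTerm.var (n := n)) with
  | [] => t
  | h :: tl => lmbAux h tl

/-- Length of a term. -/
def L : CTerm V n → ℕ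
  | .var _ => 1
  | .op f => ∑ i, L (f i)

/-- Rank of a term. -/
def R : CTerm V n → ℤ
  | .var _ => 0
  | .op f => (∑ i, R (f i)) + (∑ i : Fin n, ((i : ℕ) : ℤ) * (L (f i) : ℤ)) - (n * (n - 1) : ℤ) / 2

end CTerm

/-- The `n`-Catalan congruence on `CTerm V n`. -/
inductive CatRel (V : Type*) (n : ℕ) : CTerm V n → CTerm V n → Prop
  | refl (t) : CatRel V n t t
  | symm {t t'} : CatRel V n t t' → CatRel V n t' t
  | trans {t t' t''} : CatRel V n t t' → CatRel V n t' t'' → CatRel V n t t''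
  | compat {f g : Fin n → CTerm V n} :
      (∀ j, CatRel V n (f j) (g j)) → CatRel V n (.op f) (.op g)
  | assoc (i : ℕ) (hi : i + 1 < n) (s : Fin (2 * n - 1) → CTerm V n) :
      CatRel V n (CTerm.catAt (i + 1) hi s) (CTerm.catAt i (by omega) s)

/-- The symmetric `n`-Catalan congruence on `CTerm V n`. -/
inductive SymCatRel (V : Type*) (n : ℕ) : CTerm V n → CTerm V n → Prop
  | refl (t) : SymCatRel V n t t
  | symm {t t'} : SymCatRel V n t t' → SymCatRel V n t' t
  | trans {t t' t''} : SymCatRel V n t t' → SymCatRel V n t' t'' → SymCatRel V n t t''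
  | compat {f g : Fin n → CTerm V n} :
      (∀ j, SymCatRel V n (f j) (g j)) → SymCatRel V n (.op f) (.op g)
  | assoc (i : ℕ) (hi : i + 1 < n) (s : Fin (2 * n - 1) → CTerm V n) :
      SymCatRel V n (CTerm.catAt (i + 1) hi s) (CTerm.catAt i (by omega) s)
  | swap (i : ℕ) (hi : i + 1 < n) (s : Fin n → CTerm V n) :
      SymCatRel V n (.op s) (.op (s ∘ Equiv.swap ⟨i, by omega⟩ ⟨i + 1, hi⟩))


namespace CTerm
variable {V : Type*} {n : ℕ}

theorem lmbAux_nil (t : CTerm V n) : lmbAux t [] = t := by rw [lmbAux]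

theorem lmbAux_cons (t r : CTerm V n) (rs : List (CTerm V n)) (h2 : 2 ≤ n)
    (hl : n ≤ rs.length + 2) :
    lmbAux t (r :: rs) =
      lmbAux (.op fun i => (t :: r :: rs).getD i t) ((r :: rs).drop (n - 1)) := by
  rw [lmbAux]
  simp [h2, hl]

theorem lmbAux_chunk (t : CTerm V n) (l : List (CTerm V n)) (h2 : 2 ≤ n)
    (hl : n - 1 ≤ l.length) :
    lmbAux t l = lmbAux (.op fun i => (t :: l).getD i t) (l.drop (n - 1)) := by
  match l with
  | [] => simp at hl; omega
  | r :: rs => exact lmbAux_cons t r rs h2 (by simp at hl ⊢; omega)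

end CTerm
namespace CTerm
variable {V : Type*} {n : ℕ}

theorem getD_irrel {α : Type*} (l : List α) (i : ℕ) (h : i < l.length) (d d' : α) :
    l.getD i d = l.getD i d' := by
  rw [l.getD_eq_getElem d h, l.getD_eq_getElem d' h]

theorem lmbAux_congr : ∀ (l : List (CTerm V n)) (t t' : CTerm V n),
    CatRel V n t t' → CatRel V n (lmbAux t l) (lmbAux t' l)
  | [], t, t', h => by rw [lmbAux_nil, lmbAux_nil]; exact h
  | r :: rs, t, t', h => by
    by_cases hc : 2 ≤ n ∧ n ≤ rs.length + 2
    · rw [lmbAux_cons t r rs hc.1 hc.2, lmbAux_cons t' r rs hc.1 hc.2]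
      have := lmbAux_congr ((r :: rs).drop (n-1))
        (.op fun i => (t :: r :: rs).getD i t)
        (.op fun i => (t' :: r :: rs).getD i t') ?_
      · exact this
      · apply CatRel.compat
        rintro ⟨jv, hjlt⟩
        cases jv with
        | zero => simpa using h
        | succ k =>
          have hk : k < (r :: rs).length := by
            simp; omega
          show CatRel V n ((t :: r :: rs).getD (k+1) t) ((t' :: r :: rs).getD (k+1) t')
          simp only [List.getD_cons_succ]
          rw [getD_irrel _ k hk t t']
          exact CatRel.refl _
    · rw [lmbAux, lmbAux]
      simp only [dif_neg hc]
      exact h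
  termination_by l => l.length
  decreasing_by simp; omega

theorem catAt_zero (i : ℕ) (hi : i < n) (s : Fin (2 * n - 1) → CTerm V n) :
    CatRel V n (catAt i hi s) (catAt 0 (by omega) s) := by
  induction i with
  | zero => exact CatRel.refl _
  | succ k ih => exact CatRel.trans (CatRel.assoc k hi s) (ih (by omega))

end CTerm
namespace CTerm
variable {V : Type*} {n : ℕ}

theorem step_small (h2 : 2 ≤ n) (pre : List (CTerm V n)) (hp : pre.length < n - 1)
    (t : CTerm V n) (post : List (CTerm V n)) (g : Fin n → CTerm V n)
    (hdvd : (n - 1) ∣ (pre.length + 1 + post.length)) :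
    CatRel V n (lmbAux t (pre ++ .op g :: post))
      (lmbAux t (pre ++ (List.ofFn g ++ post))) := by
  set k := pre.length with hk
  have hq : n - 2 - k ≤ post.length := by
    obtain ⟨c, hc⟩ := hdvd
    rcases c with _ | c <;> simp [Nat.mul_succ] at hc <;> omega
  set q : ℕ := n - 2 - k with hqdef
  set S : List (CTerm V n) := t :: (pre ++ (List.ofFn g ++ post.take q)) with hSdef
  have hSlen : S.length = 2 * n - 1 := by
    simp [hSdef, List.length_take]
    omega
  set s : Fin (2 * n - 1) → CTerm V n := fun j => S.getD (j : ℕ) t with hsdef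
  have hSsplit : S = (t :: pre) ++ (List.ofFn g ++ post.take q) := by simp [hSdef]
  -- getter for S
  have hSget1 : ∀ m : ℕ, m < k + 1 → S.getD m t = (t :: pre).getD m t := by
    intro m hm
    rw [hSsplit]
    exact List.getD_append _ _ _ _ (by simp; omega)
  have hSget2 : ∀ m : ℕ, k + 1 ≤ m → (hm2 : m < k + 1 + n) →
      S.getD m t = g ⟨m - (k + 1), by omega⟩ := by
    intro m hm1 hm2
    rw [hSsplit, List.getD_append_right _ _ _ _ (by simp; omega)]
    have hlt : m - (t :: pre).length < (List.ofFn g).length := by simp; omega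
    rw [List.getD_append _ _ _ _ hlt, List.getD_eq_getElem _ _ hlt,
      List.getElem_ofFn]
    congr 1
  have hSget3 : ∀ m : ℕ, k + 1 + n ≤ m → (hm2 : m < 2 * n - 1) →
      S.getD m t = post.getD (m - (k + 1) - n) t := by
    intro m hm1 hm2
    have hidx : m - (k+1) - n < q := by omega
    rw [hSsplit, List.getD_append_right _ _ _ _ (by simp; omega),
      List.getD_append_right _ _ _ _ (by simp; omega)]
    have h1 : m - (t :: pre).length - (List.ofFn g).length < (post.take q).length := by
      simp [List.length_take]; omega
    rw [List.getD_eq_getElem _ _ h1, List.getElem_take,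
      List.getD_eq_getElem _ _ (by have := h1; simp [List.length_take] at this ⊢; omega)]
    congr 1
    simp
    omega
  -- getter agreement between S and the RHS list on the first k+1+n entries
  have hTget : ∀ m : ℕ, m < k + 1 + n →
      (t :: (pre ++ (List.ofFn g ++ post))).getD m t = S.getD m t := by
    intro m hm
    have hsplit : (t :: (pre ++ (List.ofFn g ++ post)))
        = ((t :: pre) ++ List.ofFn g) ++ post := by simp
    have hsplit2 : S = ((t :: pre) ++ List.ofFn g) ++ post.take q := by
      rw [hSsplit]; simp
    have e1 : (((t :: pre) ++ List.ofFn g) ++ post).getD m t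
        = ((t :: pre) ++ List.ofFn g).getD m t :=
      List.getD_append _ _ _ _ (by simp; omega)
    have e2 : (((t :: pre) ++ List.ofFn g) ++ post.take q).getD m t
        = ((t :: pre) ++ List.ofFn g).getD m t :=
      List.getD_append _ _ _ _ (by simp; omega)
    rw [hsplit, hsplit2, e1, e2]
  have hi : k + 1 < n := by omega
  -- LHS computation
  have hLlen : n - 1 ≤ (pre ++ CTerm.op g :: post).length := by simp; omega
  have hdropL : (pre ++ CTerm.op g :: post).drop (n - 1) = post.drop q := by
    have h1 : pre ++ CTerm.op g :: post = (pre ++ [CTerm.op g]) ++ post := by simp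
    have h2' : n - 1 = (pre ++ [CTerm.op g]).length + q := by simp; omega
    rw [h1, h2', List.drop_length_add_append]
  have hLsplit : (t :: (pre ++ CTerm.op g :: post))
      = (t :: pre) ++ (CTerm.op g :: post) := by simp
  have eqL : (CTerm.op fun j : Fin n => (t :: (pre ++ CTerm.op g :: post)).getD (j : ℕ) t)
      = catAt (k + 1) hi s := by
    unfold catAt
    congr 1
    funext j
    have hjn := j.isLt
    by_cases hlt : (j : ℕ) < k + 1
    · rw [if_pos hlt]
      show _ = S.getD (j : ℕ) t
      rw [hSget1 _ hlt, hLsplit, List.getD_append _ _ _ _ (by simp; omega)]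
    · rw [if_neg hlt]
      by_cases heq : (j : ℕ) = k + 1
      · rw [if_pos heq]
        rw [hLsplit, List.getD_append_right _ _ _ _ (by simp; omega)]
        have hz : (j : ℕ) - (t :: pre).length = 0 := by simp; omega
        rw [hz]
        show CTerm.op g = CTerm.op _
        congr 1
        funext k'
        show _ = S.getD (k + 1 + (k' : ℕ)) t
        rw [hSget2 _ (by omega) (by have := k'.isLt; omega)]
        exact congrArg g (Fin.ext (by simp)).symm
      · rw [if_neg heq]
        have hgt : k + 1 < (j : ℕ) := by omega
        show _ = S.getD ((j : ℕ) + n - 1) t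
        rw [hSget3 _ (by omega) (by omega), hLsplit,
          List.getD_append_right _ _ _ _ (by simp; omega)]
        have hidx : (j : ℕ) - (t :: pre).length = ((j : ℕ) - k - 2) + 1 := by simp; omega
        rw [hidx, List.getD_cons_succ]
        congr 1
        omega
  -- RHS computation
  have hRlen : n - 1 ≤ (pre ++ (List.ofFn g ++ post)).length := by simp; omega
  have hdropR : (pre ++ (List.ofFn g ++ post)).drop (n - 1)
      = (List.ofFn g).drop (n - 1 - k) ++ post := by
    have h1 : pre ++ (List.ofFn g ++ post) = (pre ++ List.ofFn g) ++ post := by simp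
    have h2' : n - 1 ≤ (pre ++ List.ofFn g).length := by simp; omega
    rw [h1, List.drop_append_of_le_length h2']
    congr 1
    have h3 : n - 1 = pre.length + (n - 1 - k) := by omega
    have h4 := List.drop_length_add_append (l₁ := pre) (l₂ := List.ofFn g) (n - 1 - k)
    rw [← h3] at h4
    exact h4
  have hlist2len : ((List.ofFn g).drop (n - 1 - k) ++ post).length = k + 1 + post.length := by
    simp; omega
  set H1 : CTerm V n :=
    CTerm.op fun j : Fin n => (t :: (pre ++ (List.ofFn g ++ post))).getD (j : ℕ) t with hH1
  have hdropR2 : ((List.ofFn g).drop (n - 1 - k) ++ post).drop (n - 1) = post.drop q := by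
    have h2' : n - 1 = ((List.ofFn g).drop (n - 1 - k)).length + q := by simp; omega
    have h4 := List.drop_length_add_append (l₁ := (List.ofFn g).drop (n - 1 - k)) (l₂ := post) q
    rw [← h2'] at h4
    exact h4
  have eqR : (CTerm.op fun j : Fin n =>
        (H1 :: ((List.ofFn g).drop (n - 1 - k) ++ post)).getD (j : ℕ) H1)
      = catAt 0 (by omega) s := by
    unfold catAt
    congr 1
    funext j
    have hjn := j.isLt
    by_cases h0 : (j : ℕ) = 0
    · rw [if_neg (by omega), if_pos h0, h0]
      show H1 = CTerm.op _
      rw [hH1]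
      congr 1
      funext k'
      show _ = S.getD ((0 : ℕ) + (k' : ℕ)) t
      rw [Nat.zero_add, hTget _ (by have := k'.isLt; omega)]
    · rw [if_neg (by omega), if_neg h0]
      show _ = S.getD ((j : ℕ) + n - 1) t
      have hj1 : (j : ℕ) - 1 + 1 = (j : ℕ) := by omega
      have hstep : (H1 :: ((List.ofFn g).drop (n - 1 - k) ++ post)).getD (j : ℕ) H1
          = ((List.ofFn g).drop (n - 1 - k) ++ post).getD ((j : ℕ) - 1) H1 := by
        rw [← hj1, List.getD_cons_succ, hj1]
      rw [hstep]
      by_cases hcase : (j : ℕ) - 1 < k + 1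
      · have hlt2 : (j : ℕ) - 1 < ((List.ofFn g).drop (n - 1 - k)).length := by simp; omega
        rw [List.getD_append _ _ _ _ hlt2, List.getD_eq_getElem _ _ hlt2,
          List.getElem_drop, List.getElem_ofFn,
          hSget2 _ (by omega) (by omega)]
        exact (congrArg g (Fin.ext (by simp; omega))).symm
      · have hge : ((List.ofFn g).drop (n - 1 - k)).length ≤ (j : ℕ) - 1 := by simp; omega
        rw [List.getD_append_right _ _ _ _ hge,
          hSget3 _ (by omega) (by omega)]
        have hlen3 : ((List.ofFn g).drop (n - 1 - k)).length = k + 1 := by simp; omega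
        rw [hlen3]
        have hidx2 : (j : ℕ) + n - 1 - (k + 1) - n = (j : ℕ) - 1 - (k + 1) := by omega
        rw [hidx2]
        exact getD_irrel _ _ (by omega) _ _
  -- assemble
  rw [lmbAux_chunk t _ h2 hLlen, hdropL, eqL,
    lmbAux_chunk t _ h2 hRlen, hdropR,
    lmbAux_chunk H1 _ h2 (by rw [hlist2len]; omega), hdropR2, eqR]
  exact lmbAux_congr _ _ _ (catAt_zero (k + 1) hi s)


end CTerm
namespace CTerm
variable {V : Type*} {n : ℕ}

theorem step (h2 : 2 ≤ n) :
    ∀ (pre : List (CTerm V n)) (t : CTerm V n) (post : List (CTerm V n))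
      (g : Fin n → CTerm V n),
      (n - 1) ∣ (pre.length + 1 + post.length) →
      CatRel V n (lmbAux t (pre ++ .op g :: post))
        (lmbAux t (pre ++ (List.ofFn g ++ post))) := by
  suffices h : ∀ (N : ℕ) (pre : List (CTerm V n)), pre.length ≤ N →
      ∀ (t : CTerm V n) (post : List (CTerm V n)) (g : Fin n → CTerm V n),
      (n - 1) ∣ (pre.length + 1 + post.length) →
      CatRel V n (lmbAux t (pre ++ .op g :: post))
        (lmbAux t (pre ++ (List.ofFn g ++ post))) by
    exact fun pre => h pre.length pre le_rfl
  intro N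
  induction N with
  | zero =>
    intro pre hN t post g hdvd
    exact step_small h2 pre (by omega) t post g hdvd
  | succ N ih =>
  intro pre hN t post g hdvd
  by_cases hp : n - 1 ≤ pre.length
  · -- consume a full chunk from pre
    have hL1 : n - 1 ≤ (pre ++ CTerm.op g :: post).length := by simp; omega
    have hL2 : n - 1 ≤ (pre ++ (List.ofFn g ++ post)).length := by simp; omega
    rw [lmbAux_chunk t _ h2 hL1, lmbAux_chunk t _ h2 hL2]
    have hhead : (CTerm.op fun i => (t :: (pre ++ CTerm.op g :: post)).getD i t)
        = (CTerm.op fun i => (t :: (pre ++ (List.ofFn g ++ post))).getD i t) := by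
      congr 1
      funext i
      have hi : (i : ℕ) < (t :: pre).length := by
        have := i.isLt; simp; omega
      calc (t :: (pre ++ CTerm.op g :: post)).getD i t
          = ((t :: pre) ++ CTerm.op g :: post).getD i t := by simp
        _ = (t :: pre).getD i t := List.getD_append _ _ _ _ hi
        _ = ((t :: pre) ++ (List.ofFn g ++ post)).getD i t :=
            (List.getD_append _ _ _ _ hi).symm
        _ = (t :: (pre ++ (List.ofFn g ++ post))).getD i t := by simp
    rw [hhead]
    have hd1 : (pre ++ CTerm.op g :: post).drop (n - 1)
        = pre.drop (n - 1) ++ CTerm.op g :: post := List.drop_append_of_le_length hp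
    have hd2 : (pre ++ (List.ofFn g ++ post)).drop (n - 1)
        = pre.drop (n - 1) ++ (List.ofFn g ++ post) := List.drop_append_of_le_length hp
    rw [hd1, hd2]
    exact ih (pre.drop (n - 1)) (by rw [List.length_drop]; omega) _ post g
      (by
        rw [List.length_drop]
        have he : pre.length - (n - 1) + 1 + post.length
            = (pre.length + 1 + post.length) - (n - 1) := by omega
        rw [he]
        exact Nat.dvd_sub hdvd dvd_rfl)
  · exact step_small h2 pre (by omega) t post g hdvd
end CTerm
namespace CTerm
variable {V : Type*} {n : ℕ}

theorem ofFn_ne_nil (h2 : 2 ≤ n) (f : Fin n → CTerm V n) : List.ofFn f ≠ [] := by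
  simp [List.ofFn_eq_nil_iff]; omega

theorem ofFn_head_tail (h2 : 2 ≤ n) (f : Fin n → CTerm V n) :
    f ⟨0, by omega⟩ :: (List.ofFn f).tail = List.ofFn f := by
  have h := List.cons_head_tail (ofFn_ne_nil h2 f)
  rwa [List.head_ofFn] at h

theorem tail_ofFn_length (h2 : 2 ≤ n) (f : Fin n → CTerm V n) :
    (List.ofFn f).tail.length = n - 1 := by
  simp

theorem lmbAux_op (h2 : 2 ≤ n) (f : Fin n → CTerm V n) (m : List (CTerm V n)) :
    lmbAux (.op f) m = lmbAux (f ⟨0, by omega⟩) ((List.ofFn f).tail ++ m) := by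
  have hlen : n - 1 ≤ ((List.ofFn f).tail ++ m).length := by
    simp
  rw [lmbAux_chunk _ _ h2 hlen]
  have hcons : f ⟨0, by omega⟩ :: ((List.ofFn f).tail ++ m) = List.ofFn f ++ m := by
    rw [← List.cons_append, ofFn_head_tail h2]
  have hhead : (CTerm.op fun i : Fin n =>
      (f ⟨0, by omega⟩ :: ((List.ofFn f).tail ++ m)).getD (i : ℕ) (f ⟨0, by omega⟩)) = .op f := by
    congr 1
    funext i
    rw [hcons, List.getD_append _ _ _ _ (by simp [i.isLt]),
      List.getD_eq_getElem _ _ (by simp [i.isLt]), List.getElem_ofFn]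
  have hdrop : ((List.ofFn f).tail ++ m).drop (n - 1) = m := by
    have h4 := List.drop_left (l₁ := (List.ofFn f).tail) (l₂ := m)
    rwa [tail_ofFn_length h2] at h4
  rw [hhead, hdrop]

theorem U_ne_nil (h2 : 2 ≤ n) (t : CTerm V n) : U t ≠ [] := by
  induction t with
  | var v => simp [U]
  | op f ih =>
    show ¬ _
    rw [U, List.flatten_eq_nil_iff]
    intro hall
    exact ih ⟨0, by omega⟩ (hall _ (by
      rw [List.mem_ofFn]
      exact ⟨⟨0, by omega⟩, rfl⟩))

theorem U_op (h2 : 2 ≤ n) (f : Fin n → CTerm V n) :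
    U (.op f) = U (f ⟨0, by omega⟩) ++ (((List.ofFn f).tail.map U).flatten) := by
  show (List.ofFn fun i => U (f i)).flatten = _
  have h1 : (List.ofFn fun i => U (f i)) = (List.ofFn f).map U := by
    rw [List.map_ofFn]; rfl
  rw [h1, ← ofFn_head_tail h2 f]
  simp

/-- Number of `op` nodes in a term. -/
def ops : CTerm V n → ℕ
  | .var _ => 0
  | .op f => (∑ i, ops (f i)) + 1

theorem mapvar_flatten (m : List (CTerm V n)) (hall : ∀ x ∈ m, ∃ w, x = .var w) :
    ((m.map U).flatten).map (CTerm.var (n := n)) = m := by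
  induction m with
  | nil => simp
  | cons x xs ih =>
    obtain ⟨w, rfl⟩ := hall x (by simp)
    simp only [List.map_cons, List.flatten_cons, List.map_append]
    rw [ih fun y hy => hall y (by simp [hy])]
    rfl

end CTerm
namespace CTerm
variable {V : Type*} {n : ℕ}

theorem ops_sum_ofFn (g : Fin n → CTerm V n) :
    ((List.ofFn g).map ops).sum = ∑ i, ops (g i) := by
  rw [List.map_ofFn, List.sum_ofFn]; rfl

theorem main (h2 : 2 ≤ n) : ∀ (N : ℕ) (t : CTerm V n) (m : List (CTerm V n)),
    ops t + (m.map ops).sum ≤ N → (n - 1) ∣ m.length →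
    ∀ (h : V) (rest : List V), U t ++ (m.map U).flatten = h :: rest →
    CatRel V n (lmbAux t m) (lmbAux (.var h) (rest.map .var)) := by
  intro N
  induction N using Nat.strong_induction_on with
  | _ N ih =>
  intro t m hops hdvd h rest hU
  match t with
  | .op f =>
    have hNpos : 1 ≤ N := by
      have : 1 ≤ ops (CTerm.op f) := by rw [ops]; omega
      omega
    rw [lmbAux_op h2 f m]
    apply ih (N - 1) (by omega)
    · -- measure
      have e1 : (((List.ofFn f).tail ++ m).map ops).sum
          = ((List.ofFn f).tail.map ops).sum + (m.map ops).sum := by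
        rw [List.map_append, List.sum_append]
      have e2 : ((List.ofFn f).map ops).sum
          = ops (f ⟨0, by omega⟩) + ((List.ofFn f).tail.map ops).sum := by
        conv_lhs => rw [← ofFn_head_tail h2 f]
        rw [List.map_cons, List.sum_cons]
      have e3 : ((List.ofFn f).map ops).sum = ∑ i, ops (f i) := ops_sum_ofFn f
      have e4 : ops (CTerm.op f) = (∑ i, ops (f i)) + 1 := rfl
      omega
    · simp only [List.length_append, tail_ofFn_length h2]
      exact Nat.dvd_add ⟨1, by omega⟩ hdvd
    · rw [← hU, U_op h2 f]
      simp
  | .var v =>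
    by_cases hall : ∀ x ∈ m, ∃ w, x = .var w
    · have hU' : (v : V) :: ((m.map U).flatten) = h :: rest := by
        simpa [U] using hU
      have hv : v = h := by injection hU'
      have hrest : (m.map U).flatten = rest := by injection hU'
      have hm : rest.map (CTerm.var (n := n)) = m := by
        rw [← hrest]; exact mapvar_flatten m hall
      rw [hm, ← hv]
      exact CatRel.refl _
    · push_neg at hall
      obtain ⟨x, hx, hnv⟩ := hall
      match x with
      | .var w => exact absurd rfl (hnv w)
      | .op g =>
        obtain ⟨pre, post, rfl⟩ := List.append_of_mem hx
        have hdvd' : (n - 1) ∣ pre.length + 1 + post.length := by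
          have he : pre.length + 1 + post.length = (pre ++ CTerm.op g :: post).length := by
            simp; omega
          rw [he]; exact hdvd
        have hNpos : 1 ≤ N := by
          have h5 : ((pre ++ CTerm.op g :: post).map ops).sum
              = (pre.map ops).sum + (ops (CTerm.op g) + (post.map ops).sum) := by
            simp
          have h6 : 1 ≤ ops (CTerm.op g) := by rw [ops]; omega
          omega
        refine CatRel.trans (step h2 pre (.var v) post g hdvd') ?_
        apply ih (N - 1) (by omega)
        · -- measure
          have e1 : ((pre ++ (List.ofFn g ++ post)).map ops).sum
              = (pre.map ops).sum + (((List.ofFn g).map ops).sum + (post.map ops).sum) := by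
            simp
          have e2 : ((pre ++ CTerm.op g :: post).map ops).sum
              = (pre.map ops).sum + (ops (CTerm.op g) + (post.map ops).sum) := by
            simp
          have e3 : ops (CTerm.op g) = (∑ i, ops (g i)) + 1 := rfl
          have e4 := ops_sum_ofFn g
          omega
        · simp only [List.length_append, List.length_ofFn, List.length_cons] at hdvd ⊢
          rcases hdvd with ⟨c, hc⟩
          exact ⟨c + 1, by rw [Nat.mul_add]; omega⟩
        · rw [← hU]
          have : U (CTerm.op g) = ((List.ofFn g).map U).flatten := by
            rw [U, List.map_ofFn]; rfl
          simp [this]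
end CTerm
/-- every term is related to its left-most bracketing by the
`n`-Catalan congruence. -/
theorem catRel_lmb (n : ℕ) (hn : 2 ≤ n) (V : Type*) (t : CTerm V n) :
    CatRel V n t (CTerm.lmb t) := by
  obtain ⟨h, rest, hUt⟩ : ∃ h rest, CTerm.U t = h :: rest := by
    cases hU : CTerm.U t with
    | nil => exact absurd hU (CTerm.U_ne_nil hn t)
    | cons a l => exact ⟨a, l, rfl⟩
  have hlmb : CTerm.lmb t = CTerm.lmbAux (.var h) (rest.map .var) := by
    rw [CTerm.lmb, hUt]
    rfl
  rw [hlmb]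
  have := CTerm.main hn (CTerm.ops t) t [] (by simp) (by simp) h rest (by simp [hUt])
  rwa [CTerm.lmbAux_nil] at this
end

section
/- Two terms t, t' of the free algebra F_⊗(V) on one n-ary operation are related by the n-Catalan congruence if and only if they have the same underlying list: t ≈ t' ⟺ U(t) = U(t'). -/
namespace CatProof

open List

variable {V : Type*} {n : ℕ}

/-- partial flattening of an ℕ-indexed family of lists -/
def flatL (g : ℕ → List V) : ℕ → ℕ → List V
  | _, 0 => []
  | a, m+1 => g a ++ flatL g (a+1) m

lemma flatL_congr {g g' : ℕ → List V} : ∀ (m a : ℕ),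
    (∀ i, a ≤ i → i < a + m → g i = g' i) → flatL g a m = flatL g' a m
  | 0, _, _ => rfl
  | m+1, a, h => by
    simp only [flatL]
    rw [h a le_rfl (by omega), flatL_congr m (a+1) (fun i h1 h2 => h i (by omega) (by omega))]

lemma flatL_add (g : ℕ → List V) : ∀ (m₁ a m₂ : ℕ),
    flatL g a (m₁ + m₂) = flatL g a m₁ ++ flatL g (a + m₁) m₂
  | 0, a, m₂ => by simp [flatL]
  | m₁+1, a, m₂ => by
    have h : m₁ + 1 + m₂ = (m₁ + m₂) + 1 := by omega
    rw [h]
    simp only [flatL, flatL_add g m₁ (a+1) m₂, List.append_assoc]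
    have : a + 1 + m₁ = a + (m₁ + 1) := by omega
    rw [this]

lemma flatL_shift (g : ℕ → List V) (c : ℕ) : ∀ (m a : ℕ),
    flatL g (a + c) m = flatL (fun i => g (i + c)) a m
  | 0, _ => rfl
  | m+1, a => by
    simp only [flatL]
    rw [show a + c + 1 = (a + 1) + c by omega, flatL_shift g c m (a+1)]

lemma flatten_ofFn_eq_flatL (g : ℕ → List V) : ∀ (m a : ℕ),
    (List.ofFn (fun i : Fin m => g (a + i))).flatten = flatL g a m
  | 0, _ => rfl
  | m+1, a => by
    rw [List.ofFn_succ]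
    simp only [flatten_cons, flatL, Fin.val_zero, Nat.add_zero]
    congr 1
    have h : (fun i : Fin m => g (a + ↑i.succ)) = fun i : Fin m => g ((a+1) + ↑i) := by
      funext i; congr 1; simp [Fin.val_succ]; omega
    rw [h, flatten_ofFn_eq_flatL g m (a+1)]

lemma flatten_ofFn (m : ℕ) (h : Fin m → List V) :
    (List.ofFn h).flatten = flatL (fun i => if hi : i < m then h ⟨i, hi⟩ else []) 0 m := by
  rw [← flatten_ofFn_eq_flatL]
  congr 1
  congr 1
  funext i
  simp [i.isLt]

end CatProof

namespace CatProof

variable {V : Type*} {n : ℕ}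

lemma U_op (f : Fin n → CTerm V n) :
    CTerm.U (CTerm.op f) = (List.ofFn fun i => CTerm.U (f i)).flatten := rfl

lemma flatL_split_mid (g : ℕ → List V) (p m : ℕ) (hpm : p < m) :
    flatL g 0 m = flatL g 0 p ++ (g p ++ flatL g (p+1) (m-1-p)) := by
  conv_lhs => rw [show m = p + ((m-1-p)+1) by omega]
  rw [flatL_add]
  simp only [Nat.zero_add]
  congr 1

lemma flatL_split3 (g : ℕ → List V) (p w m : ℕ) (h : p + w ≤ m) :
    flatL g 0 m = flatL g 0 p ++ (flatL g p w ++ flatL g (p+w) (m-p-w)) := by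
  conv_lhs => rw [show m = p + (w + (m-p-w)) by omega]
  rw [flatL_add, flatL_add]
  simp only [Nat.zero_add]

lemma U_catAt (hn : 2 ≤ n) (p : ℕ) (hp : p < n) (s : Fin (2 * n - 1) → CTerm V n) :
    CTerm.U (CTerm.catAt p hp s) = (List.ofFn fun i => CTerm.U (s i)).flatten := by
  have hS := flatten_ofFn (2*n-1) (fun i => CTerm.U (s i))
  rw [CTerm.catAt, U_op, flatten_ofFn, hS,
      flatL_split_mid _ p n hp,
      flatL_split3 _ p n (2*n-1) (by omega)]
  congr 1
  · apply flatL_congr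
    intro i h0 hi
    simp only [Nat.zero_add] at hi
    rw [dif_pos (show i < n by omega), dif_pos (show i < 2*n-1 by omega)]
    have h3 : ((⟨i, by omega⟩ : Fin n) : ℕ) < p := hi
    rw [if_pos h3]
  congr 1
  · rw [dif_pos hp]
    have h1 : ¬ ((⟨p, hp⟩ : Fin n) : ℕ) < p := lt_irrefl p
    have h2 : ((⟨p, hp⟩ : Fin n) : ℕ) = p := rfl
    simp only [h1, if_false, h2, if_true, if_pos]
    rw [U_op, ← flatten_ofFn_eq_flatL]
    refine congrArg List.flatten (congrArg List.ofFn ?_)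
    funext k
    rw [dif_pos (show p + (k:ℕ) < 2*n-1 by omega)]
  · rw [show 2*n-1-p-n = n-1-p by omega, show p+n = (p+1)+(n-1) by omega]
    conv_rhs => rw [flatL_shift]
    apply flatL_congr
    intro i h1 h2
    rw [dif_pos (show i < n by omega), dif_pos (show i + (n-1) < 2*n-1 by omega)]
    have hnlt : ¬ ((⟨i, by omega⟩ : Fin n) : ℕ) < p := (by omega : ¬ i < p)
    have hne : ¬ ((⟨i, by omega⟩ : Fin n) : ℕ) = p := (by omega : ¬ i = p)
    simp only [hnlt, if_false, hne]
    have e : i + n - 1 = i + (n - 1) := by omega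
    simp only [e]

end CatProof

namespace CatProof

variable {V : Type*} {n : ℕ}

lemma catAt_chain (hn : 2 ≤ n) (s : Fin (2*n-1) → CTerm V n) :
    ∀ (q : ℕ) (hq : q < n), CatRel V n (CTerm.catAt q hq s) (CTerm.catAt 0 (by omega) s)
  | 0, hq => CatRel.refl _
  | q+1, hq => CatRel.trans (CatRel.assoc q hq s) (catAt_chain hn s q (by omega))

lemma U_eq_of_catRel (hn : 2 ≤ n) {t t' : CTerm V n} (h : CatRel V n t t') :
    CTerm.U t = CTerm.U t' := by
  induction h with
  | refl t => rfl
  | symm _ ih => exact ih.symm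
  | trans _ _ ih1 ih2 => exact ih1.trans ih2
  | @compat f g _ ih =>
      rw [U_op, U_op]
      exact congrArg List.flatten (congrArg List.ofFn (funext fun j => ih j))
  | assoc i hi s => rw [U_catAt hn, U_catAt hn]

lemma lmbAux_nil (t : CTerm V n) : CTerm.lmbAux t [] = t := by
  rw [CTerm.lmbAux]

lemma lmbAux_cons_eq (t : CTerm V n) (l : List (CTerm V n)) (hl : l ≠ [])
    (h2 : 2 ≤ n) (h3 : n ≤ l.length + 1) :
    CTerm.lmbAux t l =
      CTerm.lmbAux (.op fun i => (t :: l).getD i t) (l.drop (n-1)) := by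
  match l, hl with
  | r :: rs, _ =>
    rw [CTerm.lmbAux]
    rw [dif_pos ⟨h2, by simp at h3 ⊢; omega⟩]

lemma lmbAux_congr (hn : 2 ≤ n) : ∀ (N : ℕ) (rs : List (CTerm V n)), rs.length ≤ N →
    ∀ {t t' : CTerm V n}, CatRel V n t t' →
    CatRel V n (CTerm.lmbAux t rs) (CTerm.lmbAux t' rs) := by
  intro N
  induction N with
  | zero =>
    intro rs hlen t t' h
    have : rs = [] := List.length_eq_zero_iff.mp (by omega)
    subst this
    rw [lmbAux_nil, lmbAux_nil]
    exact h
  | succ N ih =>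
    intro rs hlen t t' h
    match rs with
    | [] => rw [lmbAux_nil, lmbAux_nil]; exact h
    | r :: rs' =>
      by_cases hc : 2 ≤ n ∧ n ≤ rs'.length + 2
      · rw [CTerm.lmbAux, dif_pos hc]
        conv_rhs => rw [CTerm.lmbAux, dif_pos hc]
        apply ih
        · simp at hlen ⊢; omega
        · apply CatRel.compat
          intro j
          rcases j with ⟨jv, hj⟩
          match jv with
          | 0 =>
            simp only [List.getD_cons_zero]
            exact h
          | jv'+1 =>
            simp only [List.getD_cons_succ]
            rw [List.getD_eq_getElem _ _ (by simp; omega),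
                List.getD_eq_getElem _ _ (by simp; omega)]
            exact CatRel.refl _
      · rw [CTerm.lmbAux, dif_neg hc]
        conv_rhs => rw [CTerm.lmbAux, dif_neg hc]
        exact h

lemma ofFn_eq_cons {α : Type*} {m : ℕ} (hm : 0 < m) (f : Fin m → α) :
    List.ofFn f = f ⟨0, hm⟩ :: List.ofFn (fun i : Fin (m-1) => f ⟨(i:ℕ)+1, by omega⟩) := by
  match m, hm, f with
  | m'+1, _, f =>
    rw [List.ofFn_succ]
    congr 1

lemma U_ne_nil (hn : 2 ≤ n) (t : CTerm V n) : CTerm.U t ≠ [] := by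
  induction t with
  | var v => simp [CTerm.U]
  | op f ih =>
    rw [U_op]
    simp only [ne_eq, List.flatten_eq_nil_iff]
    intro hall
    exact ih ⟨0, by omega⟩ (hall _ (by
      rw [List.mem_ofFn]
      exact ⟨⟨0, by omega⟩, rfl⟩))

end CatProof

namespace CatProof

variable {V : Type*} {n : ℕ}

lemma expand0 (hn : 2 ≤ n) (f : Fin n → CTerm V n) (rs : List (CTerm V n)) :
    CTerm.lmbAux (.op f) rs =
      CTerm.lmbAux (f ⟨0, by omega⟩)
        (List.ofFn (fun i : Fin (n-1) => f ⟨(i:ℕ)+1, by omega⟩) ++ rs) := by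
  have hF : List.ofFn f
      = f ⟨0, by omega⟩ :: List.ofFn (fun i : Fin (n-1) => f ⟨(i:ℕ)+1, by omega⟩) :=
    ofFn_eq_cons (by omega) f
  have hlenF : (List.ofFn (fun i : Fin (n-1) => f ⟨(i:ℕ)+1, by omega⟩)).length = n - 1 := by
    simp
  conv_rhs => rw [lmbAux_cons_eq _ _ (by
      intro hcon
      apply List.append_eq_nil_iff.mp at hcon
      rw [← List.length_eq_zero_iff (l := List.ofFn _)] at hcon
      omega) hn (by simp; omega)]
  have hlist : f ⟨0, by omega⟩ ::
      (List.ofFn (fun i : Fin (n-1) => f ⟨(i:ℕ)+1, by omega⟩) ++ rs)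
      = List.ofFn f ++ rs := by
    rw [hF, List.cons_append]
  congr 1
  · refine congrArg CTerm.op ?_
    funext q
    rw [hlist, List.getD_append _ _ _ _ (by simp),
        List.getD_eq_getElem _ _ (by simp)]
    simp
  · rw [show (List.ofFn (fun i : Fin (n-1) => f ⟨(i:ℕ)+1, by omega⟩) ++ rs)
        = List.ofFn (fun i : Fin (n-1) => f ⟨(i:ℕ)+1, by omega⟩) ++ rs from rfl,
      List.drop_append, List.drop_eq_nil_of_le (by omega),
      List.nil_append, hlenF]
    simp

def opsCount : CTerm V n → ℕ
  | .var _ => 0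
  | .op f => 1 + (List.ofFn fun i => opsCount (f i)).sum

lemma opsCount_op (f : Fin n → CTerm V n) :
    opsCount (CTerm.op f) = 1 + (List.ofFn fun i => opsCount (f i)).sum := rfl

lemma map_var_flat (l : List (CTerm V n)) (h : ∀ t ∈ l, ∃ w, t = CTerm.var w) :
    List.map CTerm.var (List.map CTerm.U l).flatten = l := by
  induction l with
  | nil => rfl
  | cons t ts ih =>
    obtain ⟨w, rfl⟩ := h t (by simp)
    have hU : CTerm.U (CTerm.var (n := n) w) = [w] := rfl
    simp only [List.map_cons, List.flatten_cons, hU, List.map_append]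
    rw [ih fun t ht => h t (by simp [ht])]
    rfl

end CatProof

namespace CatProof

variable {V : Type*} {n : ℕ}

lemma expand_small (hn : 2 ≤ n) (a : List (CTerm V n)) (hr : a.length ≤ n-2)
    (h : CTerm V n) (b : List (CTerm V n)) (f : Fin n → CTerm V n) (k : ℕ)
    (hlen : (a ++ CTerm.op f :: b).length = (n-1) * k) :
    CatRel V n (CTerm.lmbAux h (a ++ CTerm.op f :: b))
      (CTerm.lmbAux h (a ++ List.ofFn f ++ b)) := by
  have hk : 1 ≤ k := by
    rcases Nat.eq_zero_or_pos k with rfl | hk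
    · simp at hlen
    · exact hk
  have hM : n - 1 ≤ (n-1) * k := Nat.le_mul_of_pos_right _ hk
  have hlen' : a.length + 1 + b.length = (n-1)*k := by simp at hlen; omega
  set M := (n-1) * k with hMdef
  have hb : n - 2 - a.length ≤ b.length := by omega
  set E : List (CTerm V n) := h :: (a ++ (List.ofFn f ++ b)) with hE
  set s : Fin (2*n-1) → CTerm V n := fun j => E.getD (j:ℕ) h with hs
  have hEa : E = (h :: a) ++ (List.ofFn f ++ b) := by rw [hE, List.cons_append]
  have hr1 : a.length + 1 < n := by omega
  have stepA : CTerm.lmbAux h (a ++ CTerm.op f :: b)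
      = CTerm.lmbAux (CTerm.catAt (a.length+1) hr1 s) (b.drop (n-2-a.length)) := by
    rw [lmbAux_cons_eq h _ (by simp) hn (by simp; omega)]
    congr 1
    · rw [CTerm.catAt]
      refine congrArg CTerm.op (funext fun q => ?_)
      have hqlt := q.isLt
      rw [← List.cons_append]
      by_cases hq1 : (q:ℕ) < a.length + 1
      · rw [if_pos hq1, hs]
        show ((h :: a) ++ (CTerm.op f :: b)).getD (q:ℕ) h = E.getD (q:ℕ) h
        rw [List.getD_append _ _ _ _ (by simp; omega), hEa,
            List.getD_append _ _ _ _ (by simp; omega)]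
      · by_cases hq2 : (q:ℕ) = a.length + 1
        · rw [if_neg hq1, if_pos hq2, hq2,
              List.getD_append_right _ _ _ _ (by simp)]
          simp only [List.length_cons, Nat.sub_self, List.getD_cons_zero]
          refine congrArg CTerm.op (funext fun kk => ?_)
          rw [hs]
          show f kk = E.getD (a.length + 1 + (kk:ℕ)) h
          rw [hEa, List.getD_append_right _ _ _ _ (by simp only [List.length_cons, List.length_append, List.length_ofFn, List.length_drop]; omega)]
          simp only [List.length_cons]
          rw [show a.length + 1 + (kk:ℕ) - (a.length + 1) = (kk:ℕ) by omega,
              List.getD_append _ _ _ _ (by simp),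
              List.getD_eq_getElem _ _ (by simp)]
          simp
        · rw [if_neg hq1, if_neg hq2, hs]
          show ((h :: a) ++ (CTerm.op f :: b)).getD (q:ℕ) h
              = E.getD ((q:ℕ) + n - 1) h
          rw [List.getD_append_right _ _ _ _ (by simp; omega), hEa,
              List.getD_append_right _ _ _ _ (by simp; omega)]
          simp only [List.length_cons]
          rw [show (q:ℕ) - (a.length+1) = ((q:ℕ) - a.length - 2) + 1 by omega,
              List.getD_cons_succ,
              List.getD_append_right _ _ _ _ (by simp; omega)]
          simp only [List.length_ofFn]
          rw [show (q:ℕ) + n - 1 - (a.length+1) - n = (q:ℕ) - a.length - 2 by omega]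
    · rw [List.drop_append, List.drop_eq_nil_of_le (by omega),
          List.nil_append,
          show n - 1 - a.length = (n-2-a.length)+1 by omega, List.drop_succ_cons]
  have stepB : CTerm.lmbAux h (a ++ List.ofFn f ++ b)
      = CTerm.lmbAux (CTerm.catAt 0 (by omega) s) (b.drop (n-2-a.length)) := by
    rw [List.append_assoc]
    rw [lmbAux_cons_eq h _ (by simp; omega) hn (by simp; omega)]
    rw [← hE]
    rw [lmbAux_cons_eq _ ((a ++ (List.ofFn f ++ b)).drop (n-1))
        (by simp; omega) hn (by simp; omega)]
    congr 1
    · rw [CTerm.catAt]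
      refine congrArg CTerm.op (funext fun q => ?_)
      have hqlt := q.isLt
      by_cases hq0 : (q:ℕ) = 0
      · rw [if_neg (by omega), if_pos hq0, hq0, List.getD_cons_zero]
        refine congrArg CTerm.op (funext fun kk => ?_)
        rw [hs]
        show E.getD (kk:ℕ) h = E.getD (0 + (kk:ℕ)) h
        rw [Nat.zero_add]
      · rw [if_neg (show ¬ (q:ℕ) < 0 by omega), if_neg hq0, hs]
        show ((CTerm.op fun i => E.getD (i:ℕ) h) ::
            (a ++ (List.ofFn f ++ b)).drop (n-1)).getD (q:ℕ)
            (CTerm.op fun i => E.getD (i:ℕ) h)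
            = E.getD ((q:ℕ) + n - 1) h
        rw [show (q:ℕ) = ((q:ℕ)-1)+1 by omega, List.getD_cons_succ]
        rw [hE, show ((q:ℕ)-1)+1+n-1 = ((n-1) + ((q:ℕ)-1)) + 1 by omega,
            List.getD_cons_succ]
        rw [List.getD_eq_getElem _ _ (by simp only [List.length_cons, List.length_append, List.length_ofFn, List.length_drop]; omega),
            List.getD_eq_getElem _ _ (by simp only [List.length_cons, List.length_append, List.length_ofFn, List.length_drop]; omega)]
        exact List.getElem_drop
    · rw [List.drop_drop, ← List.append_assoc, List.drop_append,
          List.drop_eq_nil_of_le (by simp; omega), List.nil_append]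
      have he : (n-1)+(n-1) - (a ++ List.ofFn f).length = n-2-a.length := by
        simp; omega
      rw [he]
  rw [stepA, stepB]
  exact lmbAux_congr hn (b.drop (n-2-a.length)).length _ le_rfl
    (catAt_chain hn s (a.length+1) hr1)

end CatProof

namespace CatProof

variable {V : Type*} {n : ℕ}

lemma expand (hn : 2 ≤ n) : ∀ (N : ℕ) (a : List (CTerm V n)), a.length ≤ N →
    ∀ (h : CTerm V n) (b : List (CTerm V n)) (f : Fin n → CTerm V n) (k : ℕ),
    (a ++ CTerm.op f :: b).length = (n-1) * k →
    CatRel V n (CTerm.lmbAux h (a ++ CTerm.op f :: b))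
      (CTerm.lmbAux h (a ++ List.ofFn f ++ b)) := by
  intro N
  induction N with
  | zero =>
    intro a ha h b f k hlen
    exact expand_small hn a (by omega) h b f k hlen
  | succ N ih =>
    intro a ha h b f k hlen
    by_cases hsmall : a.length ≤ n-2
    · exact expand_small hn a hsmall h b f k hlen
    · have hnn : n - 1 ≤ a.length := by omega
      have hk : 1 ≤ k := by
        rcases Nat.eq_zero_or_pos k with rfl | hk
        · simp at hlen
        · exact hk
      have hlen1 : a.length + 1 + b.length = (n-1)*k := by
        simp only [List.length_append, List.length_cons] at hlen; omega
      rw [show k = (k-1)+1 by omega, Nat.mul_add, Nat.mul_one] at hlen1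
      have hEq : (CTerm.op fun i : Fin n => (h :: (a ++ CTerm.op f :: b)).getD (i:ℕ) h)
          = (CTerm.op fun i : Fin n => (h :: (a ++ List.ofFn f ++ b)).getD (i:ℕ) h) := by
        refine congrArg CTerm.op (funext fun q => ?_)
        have hqlt := q.isLt
        rw [List.append_assoc, ← List.cons_append, ← List.cons_append,
            List.getD_append _ _ _ _ (by simp only [List.length_cons]; omega),
            List.getD_append _ _ _ _ (by simp only [List.length_cons]; omega)]
      have stepL : CTerm.lmbAux h (a ++ CTerm.op f :: b)
          = CTerm.lmbAux
              (CTerm.op fun i : Fin n => (h :: (a ++ CTerm.op f :: b)).getD (i:ℕ) h)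
              (a.drop (n-1) ++ CTerm.op f :: b) := by
        rw [lmbAux_cons_eq h _ (by simp)
            hn (by simp only [List.length_append, List.length_cons]; omega)]
        congr 1
        rw [List.drop_append,
            show n - 1 - a.length = 0 by omega, List.drop_zero]
      have stepR : CTerm.lmbAux h (a ++ List.ofFn f ++ b)
          = CTerm.lmbAux
              (CTerm.op fun i : Fin n => (h :: (a ++ List.ofFn f ++ b)).getD (i:ℕ) h)
              (a.drop (n-1) ++ List.ofFn f ++ b) := by
        rw [lmbAux_cons_eq h _
            (by simp only [ne_eq, List.append_eq_nil_iff, List.ofFn_eq_nil_iff]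
                intro hcon; omega)
            hn (by simp only [List.length_append, List.length_ofFn]; omega)]
        congr 1
        rw [List.drop_append, List.drop_append,
            show n - 1 - a.length = 0 by omega, List.drop_zero,
            show n - 1 - (a ++ List.ofFn f).length = 0 by
              simp only [List.length_append, List.length_ofFn]; omega,
            List.drop_zero]
      rw [stepL, stepR, ← hEq]
      apply ih (a.drop (n-1)) (by simp only [List.length_drop]; omega) _ b f (k-1)
      simp only [List.length_append, List.length_cons, List.length_drop]
      omega

end CatProof

namespace CatProof

variable {V : Type*} {n : ℕ}

lemma main_base (h : CTerm V n) (rs : List (CTerm V n))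
    (hall : ∀ t ∈ h :: rs, ∃ w, t = CTerm.var w)
    (v : V) (vs : List V) (hv : (List.map CTerm.U (h :: rs)).flatten = v :: vs) :
    CatRel V n (CTerm.lmbAux h rs)
      (CTerm.lmbAux (CTerm.var v) (List.map CTerm.var vs)) := by
  have hmv := map_var_flat (h :: rs) hall
  rw [hv] at hmv
  simp only [List.map_cons] at hmv
  injection hmv with e1 e2
  rw [← e1, ← e2]
  exact CatRel.refl _

lemma map_opsCount_ofFn (f : Fin n → CTerm V n) :
    (List.ofFn f).map opsCount = List.ofFn fun i => opsCount (f i) := by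
  rw [List.map_ofFn]; rfl

lemma U_op_flat (f : Fin n → CTerm V n) :
    CTerm.U (CTerm.op f) = (List.map CTerm.U (List.ofFn f)).flatten := by
  rw [U_op]; congr 1; rw [List.map_ofFn]; rfl

lemma main (hn : 2 ≤ n) : ∀ (N : ℕ) (h : CTerm V n) (rs : List (CTerm V n)),
    opsCount h + (rs.map opsCount).sum ≤ N →
    (∃ k, rs.length = (n-1) * k) →
    ∀ v vs, (List.map CTerm.U (h :: rs)).flatten = v :: vs →
    CatRel V n (CTerm.lmbAux h rs)
      (CTerm.lmbAux (CTerm.var v) (List.map CTerm.var vs)) := by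
  intro N
  induction N with
  | zero =>
    intro h rs hc _ v vs hv
    by_cases hall : ∀ t ∈ h :: rs, ∃ w, t = CTerm.var w
    · exact main_base h rs hall v vs hv
    · exfalso
      push_neg at hall
      obtain ⟨t₀, hmem, hnv⟩ := hall
      match t₀, hmem, hnv with
      | CTerm.var w, _, hnv => exact absurd rfl (hnv w)
      | CTerm.op f, hmem, _ =>
        rcases List.mem_cons.mp hmem with heq | hmem'
        · rw [← heq, opsCount_op] at hc; omega
        · have h1 : opsCount (CTerm.op f) ≤ (rs.map opsCount).sum :=
            List.single_le_sum (fun x _ => Nat.zero_le x) _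
              (List.mem_map_of_mem hmem')
          rw [opsCount_op] at h1; omega
  | succ N ih =>
    intro h rs hc hkk v vs hv
    obtain ⟨k, hk⟩ := hkk
    by_cases hall : ∀ t ∈ h :: rs, ∃ w, t = CTerm.var w
    · exact main_base h rs hall v vs hv
    · push_neg at hall
      obtain ⟨t₀, hmem, hnv⟩ := hall
      match t₀, hmem, hnv with
      | CTerm.var w, _, hnv => exact absurd rfl (hnv w)
      | CTerm.op f, hmem, _ =>
        rcases List.mem_cons.mp hmem with heq | hmem'
        · subst heq
          rw [expand0 hn f rs]
          have hofn : List.ofFn f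
              = f ⟨0, by omega⟩
                :: List.ofFn (fun i : Fin (n-1) => f ⟨(i:ℕ)+1, by omega⟩) :=
            ofFn_eq_cons (by omega) f
          apply ih
          · rw [opsCount_op, ← map_opsCount_ofFn, hofn] at hc
            simp only [List.map_append, List.sum_append, List.map_cons,
              List.sum_cons] at hc ⊢
            omega
          · refine ⟨k+1, ?_⟩
            simp only [List.length_append, List.length_ofFn, hk, Nat.mul_succ]
            omega
          · rw [← hv]
            rw [← List.cons_append, ← hofn]
            simp only [List.map_cons, List.map_append, List.flatten_cons,
              List.flatten_append, U_op_flat, List.append_assoc]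
        · obtain ⟨c, d, rfl⟩ := List.append_of_mem hmem'
          refine CatRel.trans
            (expand hn c.length c le_rfl h d f k (by rw [← hk]))
            (ih h (c ++ List.ofFn f ++ d) ?_ ⟨k+1, ?_⟩ v vs ?_)
          · simp only [List.map_append, List.sum_append, List.map_cons,
              List.sum_cons, map_opsCount_ofFn] at hc ⊢
            rw [opsCount_op] at hc
            omega
          · simp only [List.length_append, List.length_cons] at hk
            simp only [List.length_append, List.length_ofFn, Nat.mul_succ]
            omega
          · rw [← hv]
            simp only [List.map_cons, List.map_append, List.flatten_cons,
              List.flatten_append, U_op_flat, List.append_assoc]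

end CatProof

/-- two terms are related by the `n`-Catalan congruence iff they
have the same underlying list. -/
theorem catRel_iff_underlying_eq (n : ℕ) (hn : 2 ≤ n) (V : Type*) (t t' : CTerm V n) :
    CatRel V n t t' ↔ CTerm.U t = CTerm.U t' := by
  constructor
  · exact fun h => CatProof.U_eq_of_catRel hn h
  · intro hU
    obtain ⟨v, vs, hv⟩ := List.exists_cons_of_ne_nil (CatProof.U_ne_nil hn t)
    have h1 := CatProof.main hn _ t [] le_rfl ⟨0, by simp⟩ v vs (by simpa using hv)
    have h2 := CatProof.main hn _ t' [] le_rfl ⟨0, by simp⟩ v vs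
      (by simpa [← hU] using hv)
    rw [CatProof.lmbAux_nil] at h1 h2
    exact h1.trans h2.symm
end

section
/- Let T = (V,F,E) be a balanced equational theory and let t, t' ∈ 𝔽_F(V). Then t =_T t' if and only if there exists ρ ∈ Struct(T) such that t lies in the domain of ρ and ρ(t) = t'. -/
/-- The monoid of partial endomaps of a type (composition in diagrammatic
order: `(f * g) u = g (f u)`). -/
def PEnd (X : Type*) := X →. X

instance (X : Type*) : Monoid (PEnd X) where
  mul f g := PFun.comp g f
  one := PFun.id X
  mul_assoc a b c := (PFun.comp_assoc c b a).symm
  one_mul a := PFun.comp_id a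
  mul_one a := PFun.id_comp a

/-- Terms of the absolutely free term algebra over a graded signature `F` on
variables `V`. -/
inductive GTerm (V : Type*) (F : ℕ → Type*) : Type _
  | var : V → GTerm V F
  | app : {k : ℕ} → F k → (Fin k → GTerm V F) → GTerm V F

/-- Addresses: words of pairs `(G, i)` with `G` a `k`-ary symbol, `1 ≤ i ≤ k`. -/
abbrev GAddr (F : ℕ → Type*) := List (Σ k : ℕ, F k × Fin k)

namespace GTerm

variable {V : Type*} {F : ℕ → Type*}

/-- A substitution, extended to terms. -/
def subst (φ : V → GTerm V F) : GTerm V F → GTerm V F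
  | .var v => φ v
  | .app G f => .app G fun i => subst φ (f i)

/-- The support (set of variables) of a term. -/
def vars : GTerm V F → Set V
  | .var v => {v}
  | .app _ f => ⋃ i, vars (f i)

open Classical in
/-- The subterm at a given address, if defined. -/
noncomputable def subAt : GTerm V F → GAddr F → Option (GTerm V F)
  | t, [] => some t
  | .var _, _ :: _ => none
  | .app (k := k) G f, ⟨k', G', i⟩ :: w =>
    if h : k' = k then
      if (h ▸ G') = G then subAt (f (h ▸ i)) w else none
    else none

open Classical in
/-- Replace the subterm at a given address (identity where undefined). -/
noncomputable def replaceAt : GTerm V F → GAddr F → GTerm V F → GTerm V F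
  | t, [], r => r
  | .var v, _ :: _, _ => .var v
  | .app (k := k) G f, ⟨k', G', i⟩ :: w, r =>
    if h : k' = k then
      if (h ▸ G') = G then
        .app G (Function.update f (h ▸ i) (replaceAt (f (h ▸ i)) w r))
      else .app G f
    else .app G f

/-- The partial map `ρ^α_{s,t}`: defined on terms whose subterm at `α` is an
instance `s^φ` of `s`, where it replaces that subterm by `t^φ`. -/
noncomputable def rho (s t : GTerm V F) (α : GAddr F) : PEnd (GTerm V F) :=
  fun u =>
    ⟨∃ φ : V → GTerm V F, subAt u α = some (subst φ s),
     fun h => replaceAt u α (subst (Classical.choose h) t)⟩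

end GTerm

section Theory

variable {V : Type*} {F : ℕ → Type*}

/-- A pair of terms is unifiable if it has a pair of substitutions making both
terms equal. -/
def Unifiable (s t : GTerm V F) : Prop :=
  ∃ φ ψ : V → GTerm V F, GTerm.subst φ s = GTerm.subst ψ t

/-- A term occurs in the theory `E` if it is one side of one of its equations. -/
def Occurs (E : Set (GTerm V F × GTerm V F)) (s : GTerm V F) : Prop :=
  ∃ t, (s, t) ∈ E ∨ (t, s) ∈ E

/-- An equational theory is composable when any two terms occurring in it are
unifiable. -/
def Composable (E : Set (GTerm V F × GTerm V F)) : Prop :=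
  ∀ s, Occurs E s → ∀ t, Occurs E t → Unifiable s t

/-- An equational theory is balanced if both sides of each equation have the
same support. -/
def BalancedTheory (E : Set (GTerm V F × GTerm V F)) : Prop :=
  ∀ p ∈ E, GTerm.vars p.1 = GTerm.vars p.2

/-- The generators `ρ^α_{s,t}` of the structure monoid. -/
noncomputable def structGens (E : Set (GTerm V F × GTerm V F)) :
    Set (PEnd (GTerm V F)) :=
  {p | ∃ (s t : GTerm V F) (α : GAddr F),
    ((s, t) ∈ E ∨ (t, s) ∈ E) ∧ p = GTerm.rho s t α}

/-- The structure monoid `Struct(T)` of the equational theory `T = (V,F,E)`. -/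
noncomputable def StructM (E : Set (GTerm V F × GTerm V F)) :
    Submonoid (PEnd (GTerm V F)) :=
  Submonoid.closure (structGens E)

/-- The congruence `=_T` generated by the equational theory. -/
inductive EqTheory (E : Set (GTerm V F × GTerm V F)) : GTerm V F → GTerm V F → Prop
  | base {s t : GTerm V F} (h : (s, t) ∈ E) (φ : V → GTerm V F) :
      EqTheory E (GTerm.subst φ s) (GTerm.subst φ t)
  | refl (t) : EqTheory E t t
  | symm {t t'} : EqTheory E t t' → EqTheory E t' t
  | trans {t t' t''} : EqTheory E t t' → EqTheory E t' t'' → EqTheory E t t''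
  | compat {k : ℕ} (G : F k) {f g : Fin k → GTerm V F} :
      (∀ i, EqTheory E (f i) (g i)) → EqTheory E (.app G f) (.app G g)

/-- The smallest monoid congruence relating every idempotent to `1`; the
quotient by it is the universal group of the (inverse) monoid. -/
def idemCon (M : Type*) [Monoid M] : Con M :=
  conGen fun a b => a * a = a ∧ b = 1

/-- The universal group of a monoid: the quotient collapsing all idempotents. -/
def UnivGroup (M : Type*) [Monoid M] : Type _ := (idemCon M).Quotient

noncomputable instance (M : Type*) [Monoid M] : Monoid (UnivGroup M) :=
  inferInstanceAs (Monoid (idemCon M).Quotient)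

end Theory


namespace GTerm

variable {V : Type*} {F : ℕ → Type*}

theorem subst_congr {s : GTerm V F} {φ ψ : V → GTerm V F}
    (h : ∀ v ∈ vars s, φ v = ψ v) : subst φ s = subst ψ s := by
  induction s with
  | var v => exact h v rfl
  | app G f ih =>
    simp only [subst]
    congr 1
    funext i
    exact ih i fun v hv => h v (Set.mem_iUnion.mpr ⟨i, hv⟩)

theorem eqOn_of_subst_eq {s : GTerm V F} {φ ψ : V → GTerm V F}
    (h : subst φ s = subst ψ s) : ∀ v ∈ vars s, φ v = ψ v := by
  induction s with
  | var v => intro w hw; cases hw; exact h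
  | app G f ih =>
    intro v hv
    rw [vars, Set.mem_iUnion] at hv
    obtain ⟨i, hi⟩ := hv
    simp only [subst] at h
    injection h with hk hG hf
    exact ih i (congrFun hf i) v hi

theorem subAt_cons {k : ℕ} (G : F k) (f : Fin k → GTerm V F) (i : Fin k)
    (w : GAddr F) : subAt (app G f) (⟨k, G, i⟩ :: w) = subAt (f i) w := by
  rw [subAt, dif_pos rfl, if_pos rfl]

theorem replaceAt_cons {k : ℕ} (G : F k) (f : Fin k → GTerm V F) (i : Fin k)
    (w : GAddr F) (r : GTerm V F) :
    replaceAt (app G f) (⟨k, G, i⟩ :: w) r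
      = app G (Function.update f i (replaceAt (f i) w r)) := by
  rw [replaceAt, dif_pos rfl, if_pos rfl]

/-- Destructure a successful `subAt` at a cons address. -/
theorem subAt_cons_inv {u : GTerm V F} {k' : ℕ} {G' : F k'} {i' : Fin k'}
    {w : GAddr F} {x : GTerm V F} (h : subAt u (⟨k', G', i'⟩ :: w) = some x) :
    ∃ (f : Fin k' → GTerm V F), u = app G' f ∧ subAt (f i') w = some x := by
  cases u with
  | var v => rw [subAt] at h; exact absurd h (by simp)
  | @app k G f =>
    rw [subAt] at h
    split at h
    · next hk =>
      subst hk
      split at h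
      · next hG => subst hG; exact ⟨f, rfl, h⟩
      · exact absurd h (by simp)
    · exact absurd h (by simp)

theorem replaceAt_self {α : GAddr F} {u x : GTerm V F}
    (h : subAt u α = some x) : replaceAt u α x = u := by
  induction α generalizing u with
  | nil => rw [subAt] at h; cases h; rw [replaceAt]
  | cons a w ih =>
    obtain ⟨k', G', i'⟩ := a
    obtain ⟨f, rfl, hf⟩ := subAt_cons_inv h
    rw [replaceAt_cons, ih hf, Function.update_eq_self]

theorem subAt_replaceAt {α : GAddr F} {u x : GTerm V F} (r : GTerm V F)
    (h : subAt u α = some x) : subAt (replaceAt u α r) α = some r := by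
  induction α generalizing u with
  | nil => rw [replaceAt, subAt]
  | cons a w ih =>
    obtain ⟨k', G', i'⟩ := a
    obtain ⟨f, rfl, hf⟩ := subAt_cons_inv h
    rw [replaceAt_cons, subAt_cons, Function.update_self]
    exact ih hf

theorem replaceAt_replaceAt {α : GAddr F} {u x : GTerm V F} (r r' : GTerm V F)
    (h : subAt u α = some x) :
    replaceAt (replaceAt u α r) α r' = replaceAt u α r' := by
  induction α generalizing u with
  | nil => rw [replaceAt, replaceAt]
  | cons a w ih =>
    obtain ⟨k', G', i'⟩ := a
    obtain ⟨f, rfl, hf⟩ := subAt_cons_inv h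
    rw [replaceAt_cons, replaceAt_cons, replaceAt_cons, Function.update_self,
      ih hf, Function.update_idem]

theorem mem_rho_elim {s t : GTerm V F} {α : GAddr F} {u u' : GTerm V F}
    (h : u' ∈ rho s t α u) :
    ∃ φ : V → GTerm V F,
      subAt u α = some (subst φ s) ∧ u' = replaceAt u α (subst φ t) := by
  rw [rho, Part.mem_mk_iff] at h
  obtain ⟨hd, hv⟩ := h
  exact ⟨Classical.choose hd, Classical.choose_spec hd, hv.symm⟩

theorem mem_rho_intro {s t : GTerm V F} (hst : vars s = vars t) {α : GAddr F}
    {u : GTerm V F} (φ : V → GTerm V F) (h : subAt u α = some (subst φ s)) :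
    replaceAt u α (subst φ t) ∈ rho s t α u := by
  rw [rho, Part.mem_mk_iff]
  have hd : ∃ ψ, subAt u α = some (subst ψ s) := ⟨φ, h⟩
  refine ⟨hd, ?_⟩
  have hs : subst (Classical.choose hd) s = subst φ s :=
    (Option.some_injective _ (h.symm.trans (Classical.choose_spec hd))).symm
  have ht : subst (Classical.choose hd) t = subst φ t :=
    subst_congr fun v hv => eqOn_of_subst_eq hs v (hst ▸ hv)
  rw [ht]

end GTerm


theorem PEnd.mem_one_iff {X : Type*} {u u' : X} :
    u' ∈ (1 : PEnd X) u ↔ u' = u := by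
  show u' ∈ PFun.id X u ↔ u' = u
  simp [PFun.id]

theorem PEnd.mem_mul_iff {X : Type*} {f g : PEnd X} {u u' : X} :
    u' ∈ (f * g) u ↔ ∃ w, w ∈ f u ∧ u' ∈ g w := by
  show u' ∈ PFun.comp g f u ↔ _
  exact Part.mem_bind_iff

namespace GTerm

variable {V : Type*} {F : ℕ → Type*}

theorem subAt_nil (u : GTerm V F) : subAt u [] = some u := by rw [subAt]

theorem replaceAt_nil (u r : GTerm V F) : replaceAt u [] r = r := by
  rw [replaceAt]

end GTerm

section Main

variable {V : Type*} {F : ℕ → Type*} {E : Set (GTerm V F × GTerm V F)}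

open GTerm

theorem vars_eq_of_mem (hbal : BalancedTheory E) {s t : GTerm V F}
    (h : (s, t) ∈ E ∨ (t, s) ∈ E) : vars s = vars t := by
  rcases h with h | h
  · exact hbal _ h
  · exact (hbal _ h).symm

theorem rho_mem_gens {s t : GTerm V F} (α : GAddr F)
    (h : (s, t) ∈ E ∨ (t, s) ∈ E) : rho s t α ∈ StructM E :=
  Submonoid.subset_closure ⟨s, t, α, h, rfl⟩

theorem struct_symm (hbal : BalancedTheory E) {ρ : PEnd (GTerm V F)}
    (hρ : ρ ∈ StructM E) :
    ∀ u u' : GTerm V F, u' ∈ ρ u → ∃ σ ∈ StructM E, u ∈ σ u' := by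
  induction hρ using Submonoid.closure_induction with
  | mem ρ hρ =>
    obtain ⟨s, t, α, hst, rfl⟩ := hρ
    intro u u' h
    obtain ⟨φ, hsub, rfl⟩ := mem_rho_elim h
    refine ⟨rho t s α, rho_mem_gens α hst.symm, ?_⟩
    have h1 : subAt (replaceAt u α (subst φ t)) α = some (subst φ t) :=
      subAt_replaceAt _ hsub
    have h2 := mem_rho_intro (vars_eq_of_mem hbal hst).symm φ h1
    rwa [replaceAt_replaceAt _ _ hsub, replaceAt_self hsub] at h2
  | one =>
    intro u u' h
    exact ⟨1, one_mem _, PEnd.mem_one_iff.mpr (PEnd.mem_one_iff.mp h).symm⟩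
  | mul ρ₁ ρ₂ h₁ h₂ ih₁ ih₂ =>
    intro u u' h
    obtain ⟨w, hw, hw'⟩ := PEnd.mem_mul_iff.mp h
    obtain ⟨σ₂, hσ₂, hs₂⟩ := ih₂ w u' hw'
    obtain ⟨σ₁, hσ₁, hs₁⟩ := ih₁ u w hw
    exact ⟨σ₂ * σ₁, mul_mem hσ₂ hσ₁, PEnd.mem_mul_iff.mpr ⟨w, hs₂, hs₁⟩⟩

theorem struct_lift (hbal : BalancedTheory E) {k : ℕ} (G : F k) (i : Fin k)
    {ρ : PEnd (GTerm V F)} (hρ : ρ ∈ StructM E) :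
    ∃ ρ' ∈ StructM E, ∀ (f : Fin k → GTerm V F) (u' : GTerm V F),
      u' ∈ ρ (f i) → GTerm.app G (Function.update f i u') ∈ ρ' (GTerm.app G f) := by
  induction hρ using Submonoid.closure_induction with
  | mem ρ hρ =>
    obtain ⟨s, t, α, hst, rfl⟩ := hρ
    refine ⟨rho s t (⟨k, G, i⟩ :: α), rho_mem_gens _ hst, ?_⟩
    intro f u' h
    obtain ⟨φ, hsub, rfl⟩ := mem_rho_elim h
    have h1 : subAt (GTerm.app G f) (⟨k, G, i⟩ :: α) = some (subst φ s) := by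
      rw [subAt_cons]; exact hsub
    have h2 := mem_rho_intro (vars_eq_of_mem hbal hst) φ h1
    rwa [replaceAt_cons] at h2
  | one =>
    refine ⟨1, one_mem _, ?_⟩
    intro f u' h
    rw [PEnd.mem_one_iff.mp h, Function.update_eq_self]
    exact PEnd.mem_one_iff.mpr rfl
  | mul ρ₁ ρ₂ h₁ h₂ ih₁ ih₂ =>
    obtain ⟨ρ₁', hρ₁', hl₁⟩ := ih₁
    obtain ⟨ρ₂', hρ₂', hl₂⟩ := ih₂
    refine ⟨ρ₁' * ρ₂', mul_mem hρ₁' hρ₂', ?_⟩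
    intro f u' h
    obtain ⟨w, hw, hw'⟩ := PEnd.mem_mul_iff.mp h
    have s1 := hl₁ f w hw
    have s2 := hl₂ (Function.update f i w) u' (by rwa [Function.update_self])
    rw [Function.update_idem] at s2
    exact PEnd.mem_mul_iff.mpr ⟨_, s1, s2⟩

theorem eqTheory_replaceAt {α : GAddr F} {u x y : GTerm V F}
    (hx : subAt u α = some x) (h : EqTheory E x y) :
    EqTheory E u (replaceAt u α y) := by
  induction α generalizing u with
  | nil =>
    rw [subAt_nil] at hx
    cases hx
    rw [replaceAt_nil]
    exact h
  | cons a w ih =>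
    obtain ⟨k', G', i'⟩ := a
    obtain ⟨f, rfl, hf⟩ := subAt_cons_inv hx
    rw [replaceAt_cons]
    refine EqTheory.compat G' fun j => ?_
    by_cases hj : j = i'
    · subst hj
      rw [Function.update_self]
      exact ih hf
    · rw [Function.update_of_ne hj]
      exact EqTheory.refl _

end Main

/-- for a balanced equational theory `T`, two terms are related
by `=_T` iff some element of the structure monoid (a partial map) sends one to
the other. -/
theorem eqTheory_iff_structM (V : Type*) (F : ℕ → Type*)
    (E : Set (GTerm V F × GTerm V F)) (hbal : BalancedTheory E)
    (t t' : GTerm V F) :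
    EqTheory E t t' ↔ ∃ ρ ∈ StructM E, t' ∈ (ρ : PEnd (GTerm V F)) t := by
  constructor
  · intro h
    induction h with
    | base h φ =>
      rename_i s₀ t₀
      refine ⟨GTerm.rho s₀ t₀ [], rho_mem_gens [] (Or.inl h), ?_⟩
      have := GTerm.mem_rho_intro (vars_eq_of_mem hbal (Or.inl h)) φ
        (GTerm.subAt_nil (GTerm.subst φ s₀))
      rwa [GTerm.replaceAt_nil] at this
    | refl u => exact ⟨1, one_mem _, PEnd.mem_one_iff.mpr rfl⟩
    | symm h ih =>
      obtain ⟨ρ, hρ, hm⟩ := ih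
      exact struct_symm hbal hρ _ _ hm
    | trans h₁ h₂ ih₁ ih₂ =>
      obtain ⟨ρ₁, hρ₁, hm₁⟩ := ih₁
      obtain ⟨ρ₂, hρ₂, hm₂⟩ := ih₂
      exact ⟨ρ₁ * ρ₂, mul_mem hρ₁ hρ₂, PEnd.mem_mul_iff.mpr ⟨_, hm₁, hm₂⟩⟩
    | compat G hfg ih =>
      rename_i k f g
      classical
      have key : ∀ s : Finset (Fin k), ∃ ρ ∈ StructM E,
          GTerm.app G (fun j => if j ∈ s then g j else f j)
            ∈ (ρ : PEnd (GTerm V F)) (GTerm.app G f) := by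
        intro s
        induction s using Finset.induction_on with
        | empty =>
          refine ⟨1, one_mem _, ?_⟩
          have : (fun j => if j ∈ (∅ : Finset (Fin k)) then g j else f j) = f := by
            funext j; simp
          rw [this]
          exact PEnd.mem_one_iff.mpr rfl
        | @insert a s ha ihs =>
          obtain ⟨ρ, hρ, hm⟩ := ihs
          obtain ⟨ρa, hρa, hma⟩ := ih a
          obtain ⟨ρa', hρa', hla⟩ := struct_lift hbal G a hρa
          have hfa : (fun j => if j ∈ s then g j else f j) a = f a := by
            simp [ha]
          have step := hla (fun j => if j ∈ s then g j else f j) (g a)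
            (by rw [← hfa] at hma; exact hma)
          have heq : Function.update (fun j => if j ∈ s then g j else f j) a (g a)
              = fun j => if j ∈ insert a s then g j else f j := by
            funext j
            by_cases hj : j = a
            · subst hj; simp [Function.update_self]
            · simp [Function.update_of_ne hj, hj]
          rw [heq] at step
          exact ⟨ρ * ρa', mul_mem hρ hρa', PEnd.mem_mul_iff.mpr ⟨_, hm, step⟩⟩
      obtain ⟨ρ, hρ, hm⟩ := key Finset.univ
      have : (fun j => if j ∈ (Finset.univ : Finset (Fin k)) then g j else f j) = g := by
        funext j; simp
      rw [this] at hm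
      exact ⟨ρ, hρ, hm⟩
  · rintro ⟨ρ, hρ, hm⟩
    revert t t'
    induction hρ using Submonoid.closure_induction with
    | mem ρ hρ =>
      obtain ⟨s, t, α, hst, rfl⟩ := hρ
      intro u u' h
      obtain ⟨φ, hsub, rfl⟩ := GTerm.mem_rho_elim h
      refine eqTheory_replaceAt hsub ?_
      rcases hst with h' | h'
      · exact EqTheory.base h' φ
      · exact EqTheory.symm (EqTheory.base h' φ)
    | one => intro u u' h; rw [PEnd.mem_one_iff.mp h]; exact EqTheory.refl _
    | mul ρ₁ ρ₂ h₁ h₂ ih₁ ih₂ =>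
      intro u u' h
      obtain ⟨w, hw, hw'⟩ := PEnd.mem_mul_iff.mp h
      exact EqTheory.trans (ih₁ u w hw) (ih₂ w u' hw')
end

section
/- Let V be an infinite set of variables and let the signature F consist of precisely one function symbol. Then any two linear terms of 𝔽_F(V) are unifiable; consequently every linear equational theory (V,F,E) over a single function symbol is composable. -/
open Classical in
/-- The number of occurrences of a variable in a term. -/
noncomputable def countOcc {V : Type*} {F : ℕ → Type*} (v : V) :
    GTerm V F → ℕ
  | .var w => if w = v then 1 else 0
  | .app _ f => ∑ i, countOcc v (f i)

/-- A term is linear if no variable occurs in it more than once. -/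
def LinearTerm {V : Type*} {F : ℕ → Type*} (t : GTerm V F) : Prop :=
  ∀ v : V, countOcc v t ≤ 1

/-- An equation is linear if both sides are linear with equal supports. -/
def LinearEq {V : Type*} {F : ℕ → Type*} (p : GTerm V F × GTerm V F) : Prop :=
  LinearTerm p.1 ∧ LinearTerm p.2 ∧ GTerm.vars p.1 = GTerm.vars p.2

section Aux

variable {V : Type*} {F : ℕ → Type*}

/-- The depth of a term. -/
noncomputable def gdepth : GTerm V F → ℕ
  | .var _ => 0
  | .app _ f => (Finset.univ.sup fun i => gdepth (f i)) + 1

/-- Complete tree of depth `n` over the symbol `G₀` with all leaves `v₀`. -/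
noncomputable def ctree (v₀ : V) {k₀ : ℕ} (G₀ : F k₀) : ℕ → GTerm V F
  | 0 => .var v₀
  | n + 1 => .app G₀ fun _ => ctree v₀ G₀ n

theorem subst_congr_aux {φ ψ : V → GTerm V F} : ∀ {t : GTerm V F},
    (∀ v ∈ GTerm.vars t, φ v = ψ v) → GTerm.subst φ t = GTerm.subst ψ t
  | .var v, h => h v rfl
  | .app G f, h => by
      simp only [GTerm.subst]
      congr 1
      funext i
      exact subst_congr_aux fun v hv => h v (Set.mem_iUnion.2 ⟨i, hv⟩)

theorem one_le_countOcc_aux : ∀ {t : GTerm V F} {v : V},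
    v ∈ GTerm.vars t → 1 ≤ countOcc v t
  | .var w, v, h => by
      have : v = w := h
      subst this
      simp [countOcc]
  | .app G f, v, h => by
      obtain ⟨i, hi⟩ := Set.mem_iUnion.1 h
      calc 1 ≤ countOcc v (f i) := one_le_countOcc_aux hi
        _ ≤ ∑ j, countOcc v (f j) :=
          Finset.single_le_sum (f := fun j => countOcc v (f j))
            (fun j _ => Nat.zero_le _) (Finset.mem_univ i)
        _ = countOcc v (.app G f) := by simp [countOcc]

theorem key_lemma (v₀ : V) {k₀ : ℕ} (G₀ : F k₀)
    (huniq : ∀ (k : ℕ) (G : F k), (⟨k, G⟩ : Σ k, F k) = ⟨k₀, G₀⟩) :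
    ∀ (t : GTerm V F), LinearTerm t → ∀ n, gdepth t ≤ n →
      ∃ φ, GTerm.subst φ t = ctree v₀ G₀ n := by
  intro t
  induction t with
  | var v =>
    intro _ n _
    exact ⟨fun _ => ctree v₀ G₀ n, rfl⟩
  | app G f ih =>
    intro hlin n hn
    obtain ⟨hk, hG⟩ := Sigma.mk.inj_iff.mp (huniq _ G)
    subst hk
    have hG' : G = G₀ := eq_of_heq hG
    subst hG'
    cases n with
    | zero => simp [gdepth] at hn
    | succ m =>
      have hn' : (Finset.univ.sup fun i => gdepth (f i)) + 1 ≤ m + 1 := hn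
      have hdm : ∀ i, gdepth (f i) ≤ m := fun i =>
        le_trans (Finset.le_sup (f := fun i => gdepth (f i)) (Finset.mem_univ i))
          (Nat.succ_le_succ_iff.mp hn')
      have hcount : ∀ v, (∑ i, countOcc v (f i)) ≤ 1 := fun v => hlin v
      have hlin' : ∀ i, LinearTerm (f i) := by
        intro i v
        calc countOcc v (f i) ≤ ∑ j, countOcc v (f j) :=
              Finset.single_le_sum (f := fun j => countOcc v (f j))
                (fun j _ => Nat.zero_le _) (Finset.mem_univ i)
          _ ≤ 1 := hcount v
      have hex : ∀ i, ∃ φ, GTerm.subst φ (f i) = ctree v₀ G m :=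
        fun i => ih i (hlin' i) m (hdm i)
      choose φs hφs using hex
      classical
      refine ⟨fun v => if h : ∃ i, v ∈ GTerm.vars (f i) then φs h.choose v
        else GTerm.var v, ?_⟩
      show GTerm.app G _ = GTerm.app G fun _ => ctree v₀ G m
      congr 1
      funext i
      rw [← hφs i]
      apply subst_congr_aux
      intro v hv
      have h : ∃ j, v ∈ GTerm.vars (f j) := ⟨i, hv⟩
      rw [dif_pos h]
      have hch : h.choose = i := by
        by_contra hne
        have h1 := one_le_countOcc_aux hv
        have h2 := one_le_countOcc_aux h.choose_spec
        have hle : countOcc v (f h.choose) + countOcc v (f i) ≤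
            ∑ j, countOcc v (f j) := by
          calc countOcc v (f h.choose) + countOcc v (f i)
              = ∑ x ∈ ({h.choose, i} : Finset _), countOcc v (f x) :=
                (Finset.sum_pair (f := fun x => countOcc v (f x)) hne).symm
            _ ≤ ∑ j, countOcc v (f j) :=
                Finset.sum_le_sum_of_subset (Finset.subset_univ _)
        have := hcount v
        omega
      rw [hch]
  
end Aux

/-- over an infinite variable set and a signature with precisely
one function symbol, any two linear terms are unifiable; consequently, every
linear equational theory over such a signature is composable. -/
theorem linear_unifiable_and_composable (V : Type*) (F : ℕ → Type*)
    [Infinite V] (k₀ : ℕ) (G₀ : F k₀)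
    (huniq : ∀ (k : ℕ) (G : F k), (⟨k, G⟩ : Σ k, F k) = ⟨k₀, G₀⟩) :
    (∀ t₁ t₂ : GTerm V F, LinearTerm t₁ → LinearTerm t₂ → Unifiable t₁ t₂) ∧
      (∀ E : Set (GTerm V F × GTerm V F), (∀ p ∈ E, LinearEq p) →
        Composable E) := by
  obtain ⟨v₀⟩ : Nonempty V := inferInstance
  have main : ∀ t₁ t₂ : GTerm V F, LinearTerm t₁ → LinearTerm t₂ →
      Unifiable t₁ t₂ := by
    intro t₁ t₂ h₁ h₂
    obtain ⟨φ, hφ⟩ := key_lemma v₀ G₀ huniq t₁ h₁ (max (gdepth t₁) (gdepth t₂))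
      (le_max_left _ _)
    obtain ⟨ψ, hψ⟩ := key_lemma v₀ G₀ huniq t₂ h₂ (max (gdepth t₁) (gdepth t₂))
      (le_max_right _ _)
    exact ⟨φ, ψ, hφ.trans hψ.symm⟩
  refine ⟨main, ?_⟩
  intro E hE s hs t ht
  have hlin : ∀ u : GTerm V F, Occurs E u → LinearTerm u := by
    rintro u ⟨w, hw | hw⟩
    · exact (hE _ hw).1
    · exact (hE _ hw).2.1
  exact main s t (hlin s hs) (hlin t ht)
end

section
/- Let T̂ be the precategorification of a balanced equational theory T = (V,F,E). Every morphism of the free category 𝔽_{T̂}(V̂) is an identity or a composite of finitely many singular morphisms. -/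
section FreeCategory

variable {V : Type*} {F : ℕ → Type*}

/-- Morphism expressions of the free category `𝔽_{T̂}(V̂)` on the
precategorification of the equational theory `(V,F,E)`. -/
inductive PreMor (V : Type*) (F : ℕ → Type*) (E : Set (GTerm V F × GTerm V F)) :
    GTerm V F → GTerm V F → Type _
  | id (t : GTerm V F) : PreMor V F E t t
  | gen (s t : GTerm V F) (h : (s, t) ∈ E ∨ (t, s) ∈ E) (φ : V → GTerm V F) :
      PreMor V F E (GTerm.subst φ s) (GTerm.subst φ t)
  | app {k : ℕ} (G : F k) {s t : Fin k → GTerm V F}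
      (f : ∀ i, PreMor V F E (s i) (t i)) :
      PreMor V F E (.app G s) (.app G t)
  | comp {a b c : GTerm V F} :
      PreMor V F E a b → PreMor V F E b c → PreMor V F E a c

variable {E : Set (GTerm V F × GTerm V F)}

/-- Transport a morphism along equalities of its endpoints. -/
def PreMor.recast {a a' b b' : GTerm V F} (h1 : a = a') (h2 : b = b')
    (f : PreMor V F E a b) : PreMor V F E a' b' := h1 ▸ h2 ▸ f

/-- The morphism `u(h) : u^φ → u^ψ` induced by a family of morphisms
`h_x : φ(x) → ψ(x)`. -/
def termMor (φ ψ : V → GTerm V F) (h : ∀ x, PreMor V F E (φ x) (ψ x)) :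
    (u : GTerm V F) → PreMor V F E (GTerm.subst φ u) (GTerm.subst ψ u)
  | .var x => h x
  | .app G f => .app G fun i => termMor φ ψ h (f i)

/-- Whiskering `G(1,…,1,f,1,…,1)` with `f` in the `i`-th argument. -/
def gwhisk {k : ℕ} (G : F k) (g : Fin k → GTerm V F) (i : Fin k)
    {a b : GTerm V F} (f : PreMor V F E a b) :
    PreMor V F E (.app G (Function.update g i a)) (.app G (Function.update g i b)) :=
  PreMor.app G fun j =>
    if h : j = i then
      PreMor.recast (by rw [h, Function.update_self]) (by rw [h, Function.update_self]) f
    else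
      PreMor.recast (by rw [Function.update_of_ne h]) (by rw [Function.update_of_ne h])
        (PreMor.id (g j))

/-- The congruence making `𝔽_{T̂}(V̂)` a category with functorial symbols and
natural, invertible generators. -/
inductive MorEq (V : Type*) (F : ℕ → Type*) (E : Set (GTerm V F × GTerm V F)) :
    {a b : GTerm V F} → PreMor V F E a b → PreMor V F E a b → Prop
  | refl {a b} (f : PreMor V F E a b) : MorEq V F E f f
  | symm {a b} {f g : PreMor V F E a b} : MorEq V F E f g → MorEq V F E g f
  | trans {a b} {f g h : PreMor V F E a b} :
      MorEq V F E f g → MorEq V F E g h → MorEq V F E f h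
  | compCongr {a b c} {f f' : PreMor V F E a b} {g g' : PreMor V F E b c} :
      MorEq V F E f f' → MorEq V F E g g' → MorEq V F E (f.comp g) (f'.comp g')
  | appCongr {k : ℕ} (G : F k) {s t : Fin k → GTerm V F}
      {f g : ∀ i, PreMor V F E (s i) (t i)} :
      (∀ i, MorEq V F E (f i) (g i)) → MorEq V F E (.app G f) (.app G g)
  | idComp {a b} (f : PreMor V F E a b) : MorEq V F E ((PreMor.id a).comp f) f
  | compId {a b} (f : PreMor V F E a b) : MorEq V F E (f.comp (PreMor.id b)) f
  | assoc {a b c d} (f : PreMor V F E a b) (g : PreMor V F E b c)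
      (h : PreMor V F E c d) :
      MorEq V F E ((f.comp g).comp h) (f.comp (g.comp h))
  | funcId {k : ℕ} (G : F k) (s : Fin k → GTerm V F) :
      MorEq V F E (PreMor.app G fun i => PreMor.id (s i)) (PreMor.id (.app G s))
  | funcComp {k : ℕ} (G : F k) {s t u : Fin k → GTerm V F}
      (f : ∀ i, PreMor V F E (s i) (t i)) (g : ∀ i, PreMor V F E (t i) (u i)) :
      MorEq V F E ((PreMor.app G f).comp (PreMor.app G g))
        (PreMor.app G fun i => (f i).comp (g i))
  | invRight (s t : GTerm V F) (h : (s, t) ∈ E ∨ (t, s) ∈ E) (φ : V → GTerm V F) :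
      MorEq V F E ((PreMor.gen s t h φ).comp (PreMor.gen t s (Or.symm h) φ))
        (PreMor.id _)
  | natural (s t : GTerm V F) (h : (s, t) ∈ E ∨ (t, s) ∈ E)
      (φ ψ : V → GTerm V F) (hm : ∀ x, PreMor V F E (φ x) (ψ x)) :
      MorEq V F E ((termMor φ ψ hm s).comp (PreMor.gen s t h ψ))
        ((PreMor.gen s t h φ).comp (termMor φ ψ hm t))

/-- Singular morphisms: a generator instance, whiskered finitely many times. -/
inductive Singular : {a b : GTerm V F} → PreMor V F E a b → Prop
  | gen (s t : GTerm V F) (h : (s, t) ∈ E ∨ (t, s) ∈ E) (φ : V → GTerm V F) :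
      Singular (PreMor.gen s t h φ)
  | whisker {k : ℕ} (G : F k) {s t : Fin k → GTerm V F}
      (f : ∀ i, PreMor V F E (s i) (t i)) (i : Fin k) :
      Singular (f i) →
      (∀ j, j ≠ i → ∃ e : s j = t j, HEq (f j) (PreMor.id (E := E) (s j))) →
      Singular (PreMor.app G f)

/-- Finite composites of singular morphisms. -/
inductive SingComp : {a b : GTerm V F} → PreMor V F E a b → Prop
  | single {a b} {f : PreMor V F E a b} : Singular f → SingComp f
  | comp {a b c} {f : PreMor V F E a b} {g : PreMor V F E b c} :
      SingComp f → SingComp g → SingComp (f.comp g)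

/-- Being (syntactically) an identity morphism. -/
inductive IsId : {a b : GTerm V F} → PreMor V F E a b → Prop
  | mk (t : GTerm V F) : IsId (PreMor.id (E := E) t)

end FreeCategory

section Helpers

variable {V : Type*} {F : ℕ → Type*} {E : Set (GTerm V F × GTerm V F)}

lemma heq_recast {a a' b b' : GTerm V F} (h1 : a = a') (h2 : b = b')
    (f : PreMor V F E a b) : HEq (PreMor.recast h1 h2 f) f := by
  subst h1; subst h2; rfl

lemma singcomp_recast {a a' b b' : GTerm V F} (h1 : a = a') (h2 : b = b')
    {f : PreMor V F E a b} (hf : SingComp f) :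
    SingComp (PreMor.recast h1 h2 f) := by
  subst h1; subst h2; exact hf

lemma comp_recast_recast {x y z x' y' z' : GTerm V F}
    (hx : x = x') (hy : y = y') (hz : z = z')
    (p : PreMor V F E x y) (q : PreMor V F E y z) :
    MorEq V F E (PreMor.recast hx hz (p.comp q))
      ((PreMor.recast hx hy p).comp (PreMor.recast hy hz q)) := by
  subst hx; subst hy; subst hz; exact MorEq.refl _

lemma comp_recast_id {x y z : GTerm V F} (e : y = z) (f : PreMor V F E x y) :
    MorEq V F E f
      ((PreMor.recast rfl e f).comp (PreMor.recast e rfl (PreMor.id y))) := by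
  subst e; exact (MorEq.compId f).symm

lemma id_comp_recast {x y z : GTerm V F} (e : x = z) (f : PreMor V F E x y) :
    MorEq V F E f
      ((PreMor.recast rfl e (PreMor.id x)).comp (PreMor.recast e rfl f)) := by
  subst e; exact (MorEq.idComp f).symm

lemma idheq_comp {x y z : GTerm V F} (e : x = y) (f : PreMor V F E x y)
    (hf : HEq f (PreMor.id (E := E) x)) (g : PreMor V F E y z) :
    MorEq V F E (f.comp g) (PreMor.recast e.symm rfl g) := by
  subst e
  rw [eq_of_heq hf]
  exact MorEq.idComp g

lemma recast_id_heq_id {x z : GTerm V F} (h1 : x = z) :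
    HEq (PreMor.recast h1 rfl (PreMor.id (E := E) x)) (PreMor.id (E := E) z) := by
  subst h1; exact HEq.rfl

lemma isId_elim {a b : GTerm V F} {f : PreMor V F E a b} (h : IsId f) :
    ∃ e : a = b, HEq f (PreMor.id (E := E) a) := by
  cases h; exact ⟨rfl, HEq.rfl⟩

/-- Whiskering a finite composite of singulars (with identities elsewhere)
is a finite composite of singulars, up to `MorEq`. -/
lemma whisk_singcomp {a b : GTerm V F} {f : PreMor V F E a b} (hf : SingComp f) :
    ∀ {k : ℕ} (G : F k) (s t : Fin k → GTerm V F) (i : Fin k)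
      (g : ∀ j, PreMor V F E (s j) (t j)),
      s i = a → t i = b → HEq (g i) f →
      (∀ j, j ≠ i → ∃ e : s j = t j, HEq (g j) (PreMor.id (E := E) (s j))) →
      ∃ h, MorEq V F E (.app G g) h ∧ SingComp h := by
  induction hf with
  | single hsing =>
    intro k G s t i g ha hb hgi hdone
    subst ha; subst hb
    have hg : g i = _ := eq_of_heq hgi
    exact ⟨_, MorEq.refl _,
      SingComp.single (Singular.whisker G g i (hg ▸ hsing) hdone)⟩
  | @comp a b c f1 f2 hf1 hf2 ih1 ih2 =>
    intro k G s t i g ha hb hgi hdone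
    subst ha; subst hb
    have hg : g i = f1.comp f2 := eq_of_heq hgi
    set m : Fin k → GTerm V F := Function.update t i b with hm
    have hmi : m i = b := Function.update_self i b t
    have hmj : ∀ j, j ≠ i → m j = t j := fun j hj => Function.update_of_ne hj b t
    refine ?_
    let g1 : ∀ j, PreMor V F E (s j) (m j) := fun j =>
      if h : j = i then
        PreMor.recast (by rw [h]) (by rw [h]; exact hmi.symm) f1
      else PreMor.recast rfl (hmj j h).symm (g j)
    let g2 : ∀ j, PreMor V F E (m j) (t j) := fun j =>
      if h : j = i then
        PreMor.recast (by rw [h]; exact hmi.symm) (by rw [h]) f2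
      else PreMor.recast (hmj j h).symm rfl (PreMor.id (t j))
    have hg1i : g1 i = PreMor.recast rfl hmi.symm f1 := dif_pos rfl
    have hg2i : g2 i = PreMor.recast hmi.symm rfl f2 := dif_pos rfl
    have hv1 : ∀ j (h : j ≠ i), g1 j = PreMor.recast rfl (hmj j h).symm (g j) :=
      fun j h => dif_neg h
    have hv2 : ∀ j (h : j ≠ i),
        g2 j = PreMor.recast (hmj j h).symm rfl (PreMor.id (t j)) :=
      fun j h => dif_neg h
    have hfact : MorEq V F E (.app G g) ((PreMor.app G g1).comp (PreMor.app G g2)) := by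
      refine MorEq.trans (MorEq.appCongr G (f := g)
        (g := fun j => (g1 j).comp (g2 j)) ?_) (MorEq.funcComp G g1 g2).symm
      intro j
      show MorEq V F E (g j) ((g1 j).comp (g2 j))
      by_cases h : j = i
      · subst h
        rw [hg1i, hg2i, hg]
        exact comp_recast_recast rfl hmi.symm rfl f1 f2
      · rw [hv1 j h, hv2 j h]
        exact comp_recast_id (hmj j h).symm (g j)
    obtain ⟨h1, e1, hs1⟩ := ih1 G s m i g1 rfl hmi
      (by rw [hg1i]; exact heq_recast _ _ f1)
      (by
        intro j hj
        obtain ⟨e, he⟩ := hdone j hj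
        refine ⟨e.trans (hmj j hj).symm, ?_⟩
        rw [hv1 j hj]
        exact HEq.trans (heq_recast _ _ (g j)) he)
    obtain ⟨h2, e2, hs2⟩ := ih2 G m t i g2 hmi rfl
      (by rw [hg2i]; exact heq_recast _ _ f2)
      (by
        intro j hj
        refine ⟨hmj j hj, ?_⟩
        rw [hv2 j hj]
        exact recast_id_heq_id (hmj j hj).symm)
    exact ⟨h1.comp h2, hfact.trans (MorEq.compCongr e1 e2), SingComp.comp hs1 hs2⟩

/-- Peeling coordinates: an application of a symbol to a family of morphisms,
each of which is an identity (up to `HEq`) or a composite of singulars, is an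
identity or a composite of singulars up to `MorEq`. -/
lemma app_mixed (n : ℕ) :
    ∀ {k : ℕ} (G : F k) (s t : Fin k → GTerm V F)
      (g : ∀ j, PreMor V F E (s j) (t j)),
      (∀ j : Fin k,
        (∃ e : s j = t j, HEq (g j) (PreMor.id (E := E) (s j))) ∨
        (j.val < n ∧ SingComp (g j))) →
      ∃ h, MorEq V F E (.app G g) h ∧ (IsId h ∨ SingComp h) := by
  induction n with
  | zero =>
    intro k G s t g hyp
    have hdone : ∀ j, ∃ e : s j = t j, HEq (g j) (PreMor.id (E := E) (s j)) :=
      fun j => (hyp j).resolve_right (by simp)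
    have hst : s = t := funext fun j => (hdone j).1
    subst hst
    refine ⟨PreMor.id (.app G s), ?_, Or.inl (IsId.mk _)⟩
    refine MorEq.trans (MorEq.appCongr G (f := g) (g := fun j => PreMor.id (s j)) ?_)
      (MorEq.funcId G s)
    intro j
    have := eq_of_heq (hdone j).2
    rw [this]
    exact MorEq.refl _
  | succ n ih =>
    intro k G s t g hyp
    by_cases hk : n < k
    · set j0 : Fin k := ⟨n, hk⟩ with hj0
      rcases hyp j0 with hdone0 | ⟨-, hsing0⟩
      · refine ih G s t g fun j => ?_
        rcases hyp j with h | ⟨hlt, hs⟩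
        · exact Or.inl h
        · by_cases hj : j = j0
          · exact Or.inl (by rw [hj]; exact hdone0)
          · refine Or.inr ⟨?_, hs⟩
            have : j.val ≠ n := fun hv => hj (Fin.ext hv)
            omega
      · set m : Fin k → GTerm V F := Function.update t j0 (s j0) with hm
        have hmi : m j0 = s j0 := Function.update_self j0 (s j0) t
        have hmj : ∀ j, j ≠ j0 → m j = t j :=
          fun j hj => Function.update_of_ne hj (s j0) t
        let g1 : ∀ j, PreMor V F E (s j) (m j) := fun j =>
          if h : j = j0 then
            PreMor.recast (by rw [h]) (by rw [h]; exact hmi.symm)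
              (PreMor.id (s j0))
          else PreMor.recast rfl (hmj j h).symm (g j)
        let g2 : ∀ j, PreMor V F E (m j) (t j) := fun j =>
          if h : j = j0 then
            PreMor.recast (by rw [h]; exact hmi.symm) (by rw [h]) (g j0)
          else PreMor.recast (hmj j h).symm rfl (PreMor.id (t j))
        have hg1i : g1 j0 = PreMor.recast rfl hmi.symm (PreMor.id (s j0)) :=
          dif_pos rfl
        have hg2i : g2 j0 = PreMor.recast hmi.symm rfl (g j0) := dif_pos rfl
        have hv1 : ∀ j (h : j ≠ j0),
            g1 j = PreMor.recast rfl (hmj j h).symm (g j) := fun j h => dif_neg h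
        have hv2 : ∀ j (h : j ≠ j0),
            g2 j = PreMor.recast (hmj j h).symm rfl (PreMor.id (t j)) :=
          fun j h => dif_neg h
        have hfact : MorEq V F E (.app G g)
            ((PreMor.app G g1).comp (PreMor.app G g2)) := by
          refine MorEq.trans (MorEq.appCongr G (f := g)
            (g := fun j => (g1 j).comp (g2 j)) ?_) (MorEq.funcComp G g1 g2).symm
          intro j
          show MorEq V F E (g j) ((g1 j).comp (g2 j))
          by_cases h : j = j0
          · subst h
            rw [hg1i, hg2i]
            exact id_comp_recast hmi.symm (g j0)
          · rw [hv1 j h, hv2 j h]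
            exact comp_recast_id (hmj j h).symm (g j)
        obtain ⟨h1, e1, hs1⟩ := ih G s m g1 (by
          intro j
          by_cases h : j = j0
          · subst h
            refine Or.inl ⟨hmi.symm, ?_⟩
            rw [hg1i]
            exact heq_recast _ _ _
          · rcases hyp j with ⟨e, he⟩ | ⟨hlt, hs⟩
            · refine Or.inl ⟨e.trans (hmj j h).symm, ?_⟩
              rw [hv1 j h]
              exact HEq.trans (heq_recast _ _ (g j)) he
            · refine Or.inr ⟨?_, ?_⟩
              · have : j.val ≠ n := fun hv => h (Fin.ext hv)
                omega
              · rw [hv1 j h]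
                exact singcomp_recast _ _ hs)
        obtain ⟨h2, e2, hs2⟩ := whisk_singcomp hsing0 G m t j0 g2 hmi rfl
          (by rw [hg2i]; exact heq_recast _ _ (g j0))
          (by
            intro j hj
            refine ⟨hmj j hj, ?_⟩
            rw [hv2 j hj]
            exact recast_id_heq_id (hmj j hj).symm)
        rcases hs1 with hid | hsc
        · obtain ⟨e, he⟩ := isId_elim hid
          refine ⟨PreMor.recast e.symm rfl h2,
            hfact.trans ?_, Or.inr (singcomp_recast _ _ hs2)⟩
          exact MorEq.trans (MorEq.compCongr e1 e2) (idheq_comp e h1 he h2)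
        · exact ⟨h1.comp h2, hfact.trans (MorEq.compCongr e1 e2),
            Or.inr (SingComp.comp hsc hs2)⟩
    · refine ih G s t g fun j => ?_
      rcases hyp j with h | ⟨-, hs⟩
      · exact Or.inl h
      · exact Or.inr ⟨lt_of_lt_of_le j.isLt (le_of_not_gt hk), hs⟩

end Helpers

/-- STATEMENT 16: every morphism of the free category on the
precategorification of a balanced equational theory is (equal in the category
to) an identity or a finite composite of singular morphisms. -/
theorem morphism_is_composite_of_singulars (V : Type*) (F : ℕ → Type*)
    (E : Set (GTerm V F × GTerm V F)) (hbal : BalancedTheory E)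
    (a b : GTerm V F) (f : PreMor V F E a b) :
    ∃ g : PreMor V F E a b, MorEq V F E f g ∧ (IsId g ∨ SingComp g) := by
  clear hbal
  induction f with
  | id t => exact ⟨_, MorEq.refl _, Or.inl (IsId.mk t)⟩
  | gen s t h φ =>
    exact ⟨_, MorEq.refl _, Or.inr (SingComp.single (Singular.gen s t h φ))⟩
  | @app k G s t fam ih =>
    choose g hm hst using ih
    obtain ⟨h, eh, st⟩ := app_mixed k G s t g
      (fun j => (hst j).imp (fun hid => isId_elim hid) (fun hs => ⟨j.isLt, hs⟩))
    exact ⟨h, (MorEq.appCongr G hm).trans eh, st⟩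
  | comp p q ihp ihq =>
    obtain ⟨p', ep, sp⟩ := ihp
    obtain ⟨q', eq', sq⟩ := ihq
    rcases sp with hp | hp
    · cases hp
      exact ⟨q', (MorEq.compCongr ep eq').trans (MorEq.idComp q'), sq⟩
    rcases sq with hq | hq
    · cases hq
      exact ⟨p', (MorEq.compCongr ep eq').trans (MorEq.compId p'), Or.inr hp⟩
    · exact ⟨p'.comp q', MorEq.compCongr ep eq', Or.inr (SingComp.comp hp hq)⟩
end

section
/- Any two n-ary trees T_1 and T_2 have a minimal common expansion: there exists an n-ary tree S such that S is an expansion of T_1 and of T_2, and every tree S' that is an expansion of both T_1 and T_2 is an expansion of S. -/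
/-- `n`-ary trees. -/
inductive NTree (n : ℕ) : Type
  | leaf : NTree n
  | node : (Fin n → NTree n) → NTree n

namespace NTree

variable {n : ℕ}

/-- The list of leaf addresses of an `n`-ary tree, in lexicographic
(left-to-right) order. -/
def leaves : NTree n → List (List (Fin n))
  | .leaf => [[]]
  | .node f => (List.ofFn fun i => (leaves (f i)).map (i :: ·)).flatten

/-- The number of internal nodes of a tree. -/
def internal : NTree n → ℕ
  | .leaf => 0
  | .node f => 1 + ∑ i, internal (f i)

/-- Simple expansion of trees: replace one leaf by a node all of whose
children are leaves. -/
inductive SimpleExp : NTree n → NTree n → Prop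
  | base : SimpleExp .leaf (.node fun _ => .leaf)
  | congr (f : Fin n → NTree n) (j : Fin n) (t' : NTree n) :
      SimpleExp (f j) t' → SimpleExp (.node f) (.node (Function.update f j t'))

/-- `S` is an expansion of `T` when it is obtained from `T` by finitely many
simple expansions. -/
def Expansion (T S : NTree n) : Prop := Relation.ReflTransGen SimpleExp T S

end NTree

namespace NTree

variable {n : ℕ}

/-- Join (least upper bound) of two trees. -/
def join : NTree n → NTree n → NTree n
  | .leaf, t => t
  | .node f, .leaf => .node f
  | .node f, .node g => .node fun i => join (f i) (g i)

theorem expansion_node_update (f : Fin n → NTree n) (j : Fin n) {t' : NTree n}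
    (h : Expansion (f j) t') : Expansion (.node f) (.node (Function.update f j t')) := by
  induction h with
  | refl =>
      rw [Function.update_eq_self]
      exact Relation.ReflTransGen.refl
  | @tail b c _ hbc ih =>
      refine Relation.ReflTransGen.tail ih ?_
      have := SimpleExp.congr (Function.update f j b) j c (by simpa using hbc)
      simpa [Function.update_idem] using this

theorem expansion_node_of_forall {f g : Fin n → NTree n}
    (h : ∀ i, Expansion (f i) (g i)) : Expansion (.node f) (.node g) := by
  suffices H : ∀ (l : List (Fin n)) (f : Fin n → NTree n),
      (∀ i ∈ l, Expansion (f i) (g i)) → (∀ i ∉ l, f i = g i) →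
      Expansion (.node f) (.node g) by
    exact H (List.finRange n) f (fun i _ => h i) (fun i hi => absurd (List.mem_finRange i) hi)
  intro l
  induction l with
  | nil =>
      intro f _ h2
      have : f = g := funext fun i => h2 i (by simp)
      rw [this]
      exact Relation.ReflTransGen.refl
  | cons j l ih =>
      intro f h1 h2
      have hstep : Expansion (.node f) (.node (Function.update f j (g j))) :=
        expansion_node_update f j (h1 j (by simp))
      refine hstep.trans (ih _ ?_ ?_)
      · intro i _
        rcases eq_or_ne i j with rfl | hij
        · simp
          exact Relation.ReflTransGen.refl
        · simp [Function.update_of_ne hij]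
          exact h1 i (by simp [*])
      · intro i hi
        rcases eq_or_ne i j with rfl | hij
        · simp
        · rw [Function.update_of_ne hij]
          exact h2 i (by simp [hij, hi])

theorem expansion_leaf (t : NTree n) : Expansion .leaf t := by
  induction t with
  | leaf => exact Relation.ReflTransGen.refl
  | node f ih =>
      exact Relation.ReflTransGen.head SimpleExp.base (expansion_node_of_forall fun i => ih i)

theorem expansion_node_inv {f : Fin n → NTree n} {S : NTree n}
    (h : Expansion (.node f) S) :
    ∃ g : Fin n → NTree n, S = .node g ∧ ∀ i, Expansion (f i) (g i) := by
  induction h with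
  | refl => exact ⟨f, rfl, fun i => Relation.ReflTransGen.refl⟩
  | @tail b c _ hbc ih =>
      obtain ⟨g, rfl, hg⟩ := ih
      cases hbc with
      | congr _ j t' hj =>
          refine ⟨Function.update g j t', rfl, fun i => ?_⟩
          rcases eq_or_ne i j with rfl | hij
          · have h' : Expansion (f i) t' := (hg i).tail hj
            simpa using h'
          · simpa [Function.update_of_ne hij] using hg i

theorem expansion_join_left : ∀ (t s : NTree n), Expansion t (join t s)
  | .leaf, s => expansion_leaf s
  | .node f, .leaf => Relation.ReflTransGen.refl
  | .node f, .node g =>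
      expansion_node_of_forall fun i => expansion_join_left (f i) (g i)

theorem expansion_join_right : ∀ (t s : NTree n), Expansion s (join t s)
  | .leaf, s => Relation.ReflTransGen.refl
  | .node f, .leaf => expansion_leaf _
  | .node f, .node g =>
      expansion_node_of_forall fun i => expansion_join_right (f i) (g i)

theorem expansion_join_min : ∀ (t s S : NTree n),
    Expansion t S → Expansion s S → Expansion (join t s) S
  | .leaf, s, S, _, h2 => h2
  | .node f, .leaf, S, h1, _ => h1
  | .node f, .node g, S, h1, h2 => by
      obtain ⟨h, rfl, hh⟩ := expansion_node_inv h1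
      obtain ⟨h', heq, hh'⟩ := expansion_node_inv h2
      obtain rfl : h = h' := by injection heq
      exact expansion_node_of_forall fun i =>
        expansion_join_min (f i) (g i) (h i) (hh i) (hh' i)

end NTree

/-- STATEMENT 18: any two `n`-ary trees have a minimal common expansion. -/
theorem exists_minimal_common_expansion (n : ℕ) (hn : 2 ≤ n) (T₁ T₂ : NTree n) :
    ∃ S : NTree n, NTree.Expansion T₁ S ∧ NTree.Expansion T₂ S ∧
      ∀ S' : NTree n, NTree.Expansion T₁ S' → NTree.Expansion T₂ S' →
        NTree.Expansion S S' := by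
  exact ⟨T₁.join T₂, NTree.expansion_join_left T₁ T₂, NTree.expansion_join_right T₁ T₂,
    fun S' h1 h2 => NTree.expansion_join_min T₁ T₂ S' h1 h2⟩
end

section
/- For all n ≥ 2 and k ≥ 0, the set of n-ary trees having exactly k internal nodes is finite, and its cardinality c_k satisfies c_k · ((n−1)·k + 1) = C(n·k, k), the binomial coefficient; that is, the number of such trees is the generalized Catalan number C(nk,k)/((n−1)k+1). -/
namespace NTreeAux

def wt (n : ℕ) (b : Bool) : ℤ := if b then (n : ℤ) - 1 else -1

def ws (n : ℕ) (l : List Bool) : ℤ := (l.map (wt n)).sum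

@[simp] lemma ws_nil (n : ℕ) : ws n [] = 0 := rfl

@[simp] lemma ws_append (n : ℕ) (a b : List Bool) : ws n (a ++ b) = ws n a + ws n b := by
  simp [ws]

@[simp] lemma ws_cons (n : ℕ) (b : Bool) (l : List Bool) :
    ws n (b :: l) = wt n b + ws n l := by simp [ws]

def GoodN (n m : ℕ) (l : List Bool) : Prop :=
  ws n l = -(m : ℤ) ∧ ∀ p, p <+: l → p ≠ l → -(m : ℤ) + 1 ≤ ws n p

abbrev Good (n : ℕ) (l : List Bool) : Prop := GoodN n 1 l

lemma good_def {n : ℕ} {l : List Bool} :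
    Good n l ↔ ws n l = -1 ∧ ∀ p, p <+: l → p ≠ l → 0 ≤ ws n p := by
  unfold Good GoodN; norm_num

lemma Good.ne_nil {n : ℕ} {l : List Bool} (h : Good n l) : l ≠ [] := by
  rintro rfl; have := h.1; norm_num at this

lemma prefix_append_cases {p a b : List Bool} (h : p <+: a ++ b) :
    p <+: a ∨ ∃ q, q <+: b ∧ p = a ++ q := by
  obtain ⟨t, ht⟩ := h
  rw [List.append_eq_append_iff] at ht
  rcases ht with ⟨a', ha, -⟩ | ⟨c, hp, hb⟩
  · exact Or.inl ⟨a', ha.symm⟩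
  · exact Or.inr ⟨c, ⟨t, hb.symm⟩, hp⟩

lemma goodN_zero_nil (n : ℕ) : GoodN n 0 [] := by
  constructor
  · simp
  · intro p hp hne
    exact absurd (List.prefix_nil.mp hp) hne

lemma goodN_append {n m : ℕ} {a b : List Bool} (ha : Good n a) (hb : GoodN n m b) :
    GoodN n (m + 1) (a ++ b) := by
  have ha' := good_def.mp ha
  constructor
  · push_cast; rw [ws_append, ha'.1, hb.1]; ring
  · intro p hp hne
    rcases prefix_append_cases hp with hpa | ⟨q, hq, rfl⟩
    · rcases eq_or_ne p a with rfl | hpa'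
      · rcases eq_or_ne b [] with rfl | hb0
        · exact absurd (by simp) hne
        · have h0 := hb.2 [] ⟨b, rfl⟩ (Ne.symm hb0)
          rw [ha'.1]; push_cast at h0 ⊢; simp at h0; linarith
      · have := ha'.2 p hpa hpa'; push_cast; linarith
    · have hq' : q ≠ b := fun h => hne (by rw [h])
      have := hb.2 q hq hq'
      rw [ws_append, ha'.1]; push_cast at this ⊢; linarith

lemma goodN_flatten {n : ℕ} : ∀ (L : List (List Bool)), (∀ c ∈ L, Good n c) →
    GoodN n L.length (L.flatten)
  | [], _ => by simpa using goodN_zero_nil n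
  | c :: L, h => by
    have := goodN_append (h c (by simp)) (goodN_flatten L (fun x hx => h x (by simp [hx])))
    simpa [Nat.add_comm] using this

lemma good_cons_true {n : ℕ} {b : List Bool} (hb : GoodN n n b) : Good n (true :: b) := by
  constructor
  · rw [ws_cons, hb.1]; simp [wt]; ring
  · intro p hp hne
    rcases hp with ⟨t, ht⟩
    match p, ht with
    | [], _ => simp
    | true :: q, ht =>
      have hq : q <+: b := ⟨t, by simpa using ht⟩
      have hq' : q ≠ b := fun h => hne (by rw [h])
      have := hb.2 q hq hq'
      rw [ws_cons]; simp only [wt, if_true]; push_cast at this ⊢; linarith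

lemma good_false (n : ℕ) : Good n [false] := by
  constructor
  · simp [wt]
  · rintro p ⟨t, ht⟩ hne
    match p, t, ht with
    | [], _, _ => simp
    | [false], [], _ => exact absurd rfl hne

variable {n : ℕ}

def code : NTree n → List Bool
  | .leaf => [false]
  | .node f => true :: (List.ofFn fun i => code (f i)).flatten

lemma code_leaf : code (NTree.leaf : NTree n) = [false] := rfl

lemma code_node (f : Fin n → NTree n) :
    code (NTree.node f) = true :: (List.ofFn fun i => code (f i)).flatten := rfl

lemma code_ne_nil (T : NTree n) : code T ≠ [] := by
  cases T <;> simp [code_leaf, code_node]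

lemma length_code (T : NTree n) : (code T).length = n * T.internal + 1 := by
  induction T with
  | leaf => simp [code_leaf, NTree.internal]
  | node f ih =>
    simp only [code_node, List.length_cons, List.length_flatten, List.map_ofFn,
      List.sum_ofFn, NTree.internal, Function.comp]
    simp only [ih]
    rw [Finset.sum_add_distrib]
    simp [Finset.mul_sum, mul_add, mul_comm]
    ring

lemma count_code (T : NTree n) : (code T).count true = T.internal := by
  induction T with
  | leaf => simp [code_leaf, NTree.internal]
  | node f ih =>
    simp only [code_node, List.count_cons, List.count_flatten, List.map_ofFn,
      List.sum_ofFn, NTree.internal, Function.comp]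
    simp [ih, Nat.add_comm]

lemma good_code (T : NTree n) : Good n (code T) := by
  induction T with
  | leaf => exact good_false n
  | node f ih =>
    rw [code_node]
    apply good_cons_true
    have h := goodN_flatten (n := n) (List.ofFn fun i => code (f i)) ?_
    · simpa using h
    · intro c hc
      obtain ⟨i, rfl⟩ := (List.mem_ofFn.mp hc)
      exact ih i

lemma code_append_inj : ∀ (T T' : NTree n) (r r' : List Bool),
    code T ++ r = code T' ++ r' → T = T' ∧ r = r' := by
  intro T
  induction T with
  | leaf =>
    intro T' r r' h
    cases T' with
    | leaf => simpa [code_leaf] using h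
    | node f' => simp [code_leaf, code_node] at h
  | node f ih =>
    intro T' r r' h
    cases T' with
    | leaf => simp [code_leaf, code_node] at h
    | node f' =>
      simp only [code_node, List.cons_append, List.cons.injEq, true_and] at h
      -- turn into lists of children
      have key : ∀ (L L' : List (NTree n)) (r r' : List Bool),
          (∀ T ∈ L, ∀ (T' : NTree n) (r r' : List Bool),
            code T ++ r = code T' ++ r' → T = T' ∧ r = r') →
          L.length = L'.length →
          (L.map code).flatten ++ r = (L'.map code).flatten ++ r' →
          L = L' ∧ r = r' := by
        intro L
        induction L with
        | nil =>
          intro L' r r' _ hlen h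
          cases L' with
          | nil => simpa using h
          | cons => simp at hlen
        | cons c L ihL =>
          intro L' r r' hmem hlen h
          cases L' with
          | nil => simp at hlen
          | cons c' L'' =>
            simp only [List.map_cons, List.flatten_cons, List.append_assoc] at h
            obtain ⟨rfl, h2⟩ := hmem c (by simp) c' _ _ h
            obtain ⟨rfl, h3⟩ := ihL _ _ _ (fun T hT => hmem T (by simp [hT]))
              (by simpa using hlen) h2
            exact ⟨rfl, h3⟩
      have h2 := key (List.ofFn f) (List.ofFn f') r r' ?_ (by simp) ?_
      · obtain ⟨hL, hr⟩ := h2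
        exact ⟨by rw [List.ofFn_injective hL], hr⟩
      · intro T hT
        obtain ⟨i, rfl⟩ := (List.mem_ofFn.mp hT)
        exact ih i
      · simpa [List.map_ofFn, Function.comp_def] using h

lemma code_injective : Function.Injective (code : NTree n → List Bool) := by
  intro T T' h
  exact (code_append_inj T T' [] [] (by simpa using h)).1

lemma goodN_zero_eq_nil {l : List Bool} (h : GoodN n 0 l) : l = [] := by
  by_contra hne
  have := h.2 [] ⟨l, rfl⟩ (Ne.symm hne)
  simp at this

lemma split1 : ∀ (N : ℕ) (l : List Bool), l.length ≤ N → ws n l ≤ -1 →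
    ∃ p q, l = p ++ q ∧ Good n p := by
  intro N
  induction N with
  | zero =>
    intro l hl h
    rw [Nat.le_zero, List.length_eq_zero_iff] at hl
    subst hl; norm_num at h
  | succ N ihN =>
    intro l hl h
    match l with
    | [] => norm_num at h
    | false :: t => exact ⟨[false], t, rfl, good_false n⟩
    | true :: t =>
      have hlt : t.length ≤ N := by simpa using Nat.lt_succ_iff.mp (Nat.lt_of_lt_of_le (by simp) hl)
      have inner : ∀ (m : ℕ) (u : List Bool), u.length ≤ N → ws n u ≤ -(m : ℤ) →
          ∃ p q, u = p ++ q ∧ GoodN n m p := by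
        intro m
        induction m with
        | zero => intro u _ _; exact ⟨[], u, rfl, goodN_zero_nil n⟩
        | succ m ihm =>
          intro u hu hwsu
          have h1 : ws n u ≤ -1 := by push_cast at hwsu; linarith
          obtain ⟨p, q, rfl, hp⟩ := ihN u hu h1
          have hq : ws n q ≤ -(m : ℤ) := by
            have h2 := hp.1
            rw [ws_append] at hwsu
            push_cast at hwsu h2 ⊢; linarith
          have hql : q.length ≤ N := by
            have : (p ++ q).length = p.length + q.length := by simp
            omega
          obtain ⟨p2, q2, rfl, hp2⟩ := ihm q hql hq
          exact ⟨p ++ p2, q2, by simp, goodN_append hp hp2⟩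
      have hwt : ws n t ≤ -(n : ℤ) := by
        rw [ws_cons] at h; simp [wt] at h; linarith
      obtain ⟨p, q, rfl, hp⟩ := inner n t hlt hwt
      exact ⟨true :: p, q, rfl, good_cons_true hp⟩

lemma ofFn_get_cast {α : Type*} (ts : List α) {m : ℕ} (h : ts.length = m) :
    List.ofFn (fun i : Fin m => ts.get (Fin.cast h.symm i)) = ts := by
  subst h
  simpa [Fin.cast] using List.ofFn_get ts

lemma parse : ∀ (N : ℕ) (l : List Bool), l.length ≤ N → Good n l →
    ∃ T : NTree n, code T = l := by
  intro N
  induction N with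
  | zero =>
    intro l hl hg
    rw [Nat.le_zero, List.length_eq_zero_iff] at hl
    exact absurd hl hg.ne_nil
  | succ N ihN =>
    intro l hl hg
    match l with
    | [] => exact absurd rfl hg.ne_nil
    | false :: t =>
      match t with
      | [] => exact ⟨NTree.leaf, rfl⟩
      | b :: t' =>
        have := (good_def.mp hg).2 [false] ⟨b :: t', rfl⟩ (by simp)
        simp [ws, wt] at this
    | true :: t =>
      have hlt : t.length ≤ N := by simp at hl; omega
      have hg' := good_def.mp hg
      have hgt : GoodN n n t := by
        constructor
        · have := hg'.1; rw [ws_cons] at this; simp [wt] at this; linarith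
        · intro p hp hne
          have hpre : true :: p <+: true :: t := by
            obtain ⟨s, hs⟩ := hp; exact ⟨s, by simp [hs]⟩
          have := hg'.2 (true :: p) hpre (by simpa using hne)
          rw [ws_cons] at this; simp [wt] at this; linarith
      have inner : ∀ (m : ℕ) (u : List Bool), u.length ≤ N → GoodN n m u →
          ∃ ts : List (NTree n), ts.length = m ∧ (ts.map code).flatten = u := by
        intro m
        induction m with
        | zero =>
          intro u _ hgu
          exact ⟨[], rfl, by simp [goodN_zero_eq_nil hgu]⟩
        | succ m ihm =>
          intro u hu hgu
          have h1 : ws n u ≤ -1 := by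
            have := hgu.1; push_cast at this; linarith
          obtain ⟨p, q, rfl, hp⟩ := split1 N u hu h1
          have hp1 := (good_def.mp hp).1
          have hq : GoodN n m q := by
            constructor
            · have := hgu.1; rw [ws_append, hp1] at this; push_cast at this ⊢; linarith
            · intro r hr hrne
              have hpre : p ++ r <+: p ++ q := by
                obtain ⟨s, hs⟩ := hr; exact ⟨s, by simp [hs]⟩
              have hne2 : p ++ r ≠ p ++ q := by
                simpa using hrne
              have := hgu.2 (p ++ r) hpre hne2
              rw [ws_append, hp1] at this; push_cast at this ⊢; linarith
          have hplen : p.length ≤ N := by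
            have : (p ++ q).length = p.length + q.length := by simp
            omega
          have hqlen : q.length ≤ N := by
            have : (p ++ q).length = p.length + q.length := by simp
            omega
          obtain ⟨T, hT⟩ := ihN p hplen hp
          obtain ⟨ts, hts, hflat⟩ := ihm q hqlen hq
          exact ⟨T :: ts, by simp [hts], by simp [hT, hflat]⟩
      obtain ⟨ts, hlen, hflat⟩ := inner n t hlt hgt
      refine ⟨NTree.node (fun i => ts.get (Fin.cast hlen.symm i)), ?_⟩
      rw [code_node]
      congr 1
      have hofn : (List.ofFn fun i => code (ts.get (Fin.cast hlen.symm i))) = ts.map code := by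
        rw [show (fun i => code (ts.get (Fin.cast hlen.symm i)))
            = code ∘ (fun i : Fin n => ts.get (Fin.cast hlen.symm i)) from rfl,
          ← List.map_ofFn, ofFn_get_cast ts hlen]
      rw [hofn, hflat]

lemma ws_take_drop (l : List Bool) (i t : ℕ) :
    ws n (l.take i) + ws n ((l.drop i).take t) = ws n (l.take (i + t)) := by
  rw [List.take_add, ws_append]

lemma good_of_prefix_sums (l : List Bool) (hsum : ws n l = -1)
    (h : ∀ j < l.length, 0 ≤ ws n (l.take j)) : Good n l := by
  rw [good_def]
  refine ⟨hsum, fun p hp hne => ?_⟩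
  have hlt : p.length < l.length := by
    refine lt_of_le_of_ne hp.length_le (fun h => hne ?_)
    rw [List.prefix_iff_eq_take.mp hp, h, List.take_length]
  have := h p.length hlt
  rwa [← List.prefix_iff_eq_take.mp hp] at this

lemma exists_good_rotate (l : List Bool) (hsum : ws n l = -1) :
    ∃ i < l.length, Good n (l.rotate i) := by
  have hne : l ≠ [] := by rintro rfl; norm_num at hsum
  have hNpos : 0 < l.length := List.length_pos_iff.mpr hne
  have hFne : ((Finset.range (l.length + 1)).image (fun j => ws n (l.take j))).Nonempty :=
    ⟨ws n (l.take 0), Finset.mem_image_of_mem _ (by simp)⟩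
  set M := ((Finset.range (l.length + 1)).image (fun j => ws n (l.take j))).min' hFne with hM
  have hMle : ∀ j ≤ l.length, M ≤ ws n (l.take j) := fun j hj =>
    Finset.min'_le _ _ (Finset.mem_image_of_mem _ (by simp; omega))
  have hex : ∃ j, j ≤ l.length ∧ ws n (l.take j) = M := by
    obtain ⟨j, hj, hjM⟩ := Finset.mem_image.mp (Finset.min'_mem _ hFne)
    exact ⟨j, by simp at hj; omega, hjM⟩
  obtain ⟨i, hiN, hiM, himin⟩ : ∃ i, i ≤ l.length ∧ ws n (l.take i) = M ∧
      ∀ j < i, M + 1 ≤ ws n (l.take j) := by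
    refine ⟨Nat.find hex, (Nat.find_spec hex).1, (Nat.find_spec hex).2, fun j hj => ?_⟩
    have h0 := (Nat.find_spec hex).1
    have h1 := Nat.find_min hex hj
    have h2 : M ≤ ws n (l.take j) := hMle j (by omega)
    have h3 : ws n (l.take j) ≠ M := fun h => h1 ⟨by omega, h⟩
    omega
  clear hM hex
  have hsplit : ∀ i, ws n (l.take i) + ws n (l.drop i) = ws n l := fun i => by
    rw [← ws_append, List.take_append_drop]
  rcases eq_or_lt_of_le hiN with heq | hilt
  · -- the minimum is attained only at the very end: l itself is good
    refine ⟨0, hNpos, ?_⟩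
    rw [List.rotate_zero]
    apply good_of_prefix_sums l hsum
    intro j hj
    have h1 := himin j (by omega)
    have h2 : ws n (l.take l.length) = -1 := by rw [List.take_length, hsum]
    rw [heq] at hiM
    omega
  · refine ⟨i, hilt, ?_⟩
    rw [List.rotate_eq_drop_append_take (by omega)]
    apply good_of_prefix_sums
    · rw [ws_append]
      have := hsplit i
      linarith
    · intro j hj
      simp only [List.length_append, List.length_drop, List.length_take] at hj
      rw [List.take_append]
      have hdl : (l.drop i).length = l.length - i := by simp
      rcases le_or_gt j (l.length - i) with hc | hc
      · have hz : j - (l.drop i).length = 0 := by omega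
        rw [hz, List.take_zero, ws_append, ws_nil]
        have h1 := ws_take_drop (n := n) l i j
        have h2 : M ≤ ws n (l.take (i + j)) := hMle _ (by omega)
        linarith
      · rw [List.take_of_length_le (by omega), ws_append]
        have h1 := ws_take_drop (n := n) l i (l.length - i)
        have h2 : l.take (i + (l.length - i)) = l := by
          rw [show i + (l.length - i) = l.length from by omega]; simp
        have h3 : (l.drop i).take (l.length - i) = l.drop i :=
          List.take_of_length_le (by simp)
        rw [h2, h3, hsum] at h1
        have h4 : (l.take i).take (j - (l.drop i).length) = l.take (j - (l.drop i).length) := by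
          rw [List.take_take]; congr 1; omega
        have h5 : M + 1 ≤ ws n (l.take (j - (l.drop i).length)) := himin _ (by omega)
        rw [h4]
        linarith

lemma good_rotate_eq_zero (l : List Bool) (hg : Good n l) (i : ℕ) (hi : i < l.length)
    (hgr : Good n (l.rotate i)) : i = 0 := by
  by_contra h0
  have hip : 0 < i := Nat.pos_of_ne_zero h0
  rw [List.rotate_eq_drop_append_take hi.le] at hgr
  have htake : (l.take i).length = i := by simp; omega
  have hne2 : l.drop i ≠ l.drop i ++ l.take i := by
    intro h
    have := congrArg List.length h
    simp [htake] at this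
    omega
  have key := (good_def.mp hgr).2 (l.drop i) ⟨l.take i, rfl⟩ hne2
  have h2 := (good_def.mp hg).2 (l.take i) (List.take_prefix i l)
    (by intro h; have := congrArg List.length h; simp at this; omega)
  have h3 : ws n (l.take i) + ws n (l.drop i) = ws n l := by
    rw [← ws_append, List.take_append_drop]
  have h4 := (good_def.mp hg).1
  linarith

lemma ws_eq_count (l : List Bool) :
    ws n l = (n : ℤ) * l.count true - l.length := by
  induction l with
  | nil => simp
  | cons b t ih =>
    cases b <;> simp [List.count_cons, wt, ih] <;> push_cast <;> ring

lemma count_eq_sum (a : Bool) (l : List Bool) :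
    l.count a = (l.map (fun b => if b = a then 1 else 0)).sum := by
  induction l with
  | nil => simp
  | cons b t ih => cases b <;> cases a <;> simp [List.count_cons, ih] <;> omega

lemma count_ofFn (N : ℕ) (f : Fin N → Bool) :
    (List.ofFn f).count true = (Finset.univ.filter (fun i => f i = true)).card := by
  rw [count_eq_sum, List.map_ofFn, List.sum_ofFn, Finset.card_filter]
  rfl

lemma ofFn_getD {N : ℕ} (l : List Bool) (h : l.length = N) :
    List.ofFn (fun i : Fin N => l.getD i false) = l := by
  subst h
  apply List.ext_getElem (by simp)
  intro i h1 h2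
  simp only [List.getElem_ofFn]
  exact List.getD_eq_getElem l false (by simpa using h2)

lemma card_words (N k : ℕ) :
    Nat.card {l : List Bool // l.length = N ∧ l.count true = k} = N.choose k := by
  have e1 : {l : List Bool // l.length = N ∧ l.count true = k} ≃
      {s : Finset (Fin N) // s.card = k} := by
    refine ⟨fun l => ⟨Finset.univ.filter (fun i : Fin N => l.val.getD i false = true), ?_⟩,
      fun s => ⟨List.ofFn (fun i : Fin N => i ∈ s.val), by simp, ?_⟩, ?_, ?_⟩
    · obtain ⟨l, hlen, hc⟩ := l
      have := count_ofFn N (fun i => l.getD i false)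
      rw [ofFn_getD l hlen, hc] at this
      exact this.symm
    · obtain ⟨s, hs⟩ := s
      rw [count_ofFn]
      have h2 : (Finset.univ.filter fun i : Fin N => (decide (i ∈ s)) = true) = s := by
        ext i; simp
      simpa [h2] using hs
    · rintro ⟨l, hlen, hc⟩
      apply Subtype.ext
      dsimp only
      conv_rhs => rw [← ofFn_getD l hlen]
      congr 1
      funext i
      simp
    · rintro ⟨s, hs⟩
      apply Subtype.ext
      simp only
      ext i
      simp only [Finset.mem_filter, Finset.mem_univ, true_and]
      constructor
      · intro h
        have : (List.ofFn fun j : Fin N => decide (j ∈ s)).getD i false = true := h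
        rw [List.getD_eq_getElem _ _ (by simp [i.isLt])] at this
        simpa using this
      · intro h
        show (List.ofFn fun j : Fin N => decide (j ∈ s)).getD i false = true
        rw [List.getD_eq_getElem _ _ (by simp [i.isLt])]
        simpa using h
  rw [Nat.card_congr e1, Nat.card_eq_fintype_card, Fintype.card_finset_len,
    Fintype.card_fin]

lemma rotate_eq_iff_eq {w w' : List Bool} {N i j : ℕ} (hw : Good n w) (hw' : Good n w')
    (hlen : w.length = N) (hlen' : w'.length = N) (hi : i < N) (hj : j < N)
    (h : w.rotate i = w'.rotate j) : w = w' ∧ i = j := by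
  have hNpos : 0 < N := by omega
  have hd : w' = w.rotate ((i + (N - j)) % N) := by
    have e1 : w'.rotate (j + (N - j)) = w' := by
      rw [show j + (N - j) = N from by omega, ← hlen', List.rotate_length]
    calc w' = (w'.rotate j).rotate (N - j) := by rw [List.rotate_rotate, e1]
      _ = (w.rotate i).rotate (N - j) := by rw [h]
      _ = w.rotate (i + (N - j)) := List.rotate_rotate w i (N - j)
      _ = w.rotate ((i + (N - j)) % N) := by
          have h2 := List.rotate_mod w (i + (N - j))
          rw [hlen] at h2
          exact h2.symm
  have hdlt : (i + (N - j)) % N < N := Nat.mod_lt _ hNpos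
  have hgr : Good n (w.rotate ((i + (N - j)) % N)) := hd ▸ hw'
  have hzero := good_rotate_eq_zero w hw ((i + (N - j)) % N)
    (lt_of_lt_of_eq hdlt hlen.symm) hgr
  rw [hzero, List.rotate_zero] at hd
  obtain ⟨c, hc⟩ := Nat.dvd_of_mod_eq_zero hzero
  have hij : i = j := by
    match c with
    | 0 => omega
    | 1 => omega
    | (c + 2) =>
      have h2 : N * 2 ≤ N * (c + 2) := Nat.mul_le_mul_left N (by omega)
      omega
  exact ⟨hd.symm, hij⟩

lemma key_bijective (hn : 1 ≤ n) (k : ℕ) :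
    Function.Bijective (fun p : {T : NTree n // T.internal = k} × Fin (n * k + 1) =>
      (⟨(code p.1.val).rotate p.2.val,
        by rw [List.length_rotate, length_code, p.1.prop],
        by rw [(List.rotate_perm _ _).count_eq, count_code, p.1.prop]⟩ :
        {l : List Bool // l.length = n * k + 1 ∧ l.count true = k})) := by
  constructor
  · rintro ⟨⟨T, hT⟩, i⟩ ⟨⟨T', hT'⟩, j⟩ h
    simp only [Subtype.mk.injEq] at h
    have h1 : (code T).length = n * k + 1 := by rw [length_code, hT]
    have h2 : (code T').length = n * k + 1 := by rw [length_code, hT']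
    obtain ⟨hw, hij⟩ := rotate_eq_iff_eq (good_code T) (good_code T') h1 h2 i.isLt j.isLt h
    have : T = T' := code_injective hw
    subst this
    simp [Fin.ext_iff, hij]
  · rintro ⟨w, hlen, hcount⟩
    have hws : ws n w = -1 := by
      rw [ws_eq_count, hlen, hcount]; push_cast; ring
    obtain ⟨i, hi, hgood⟩ := exists_good_rotate w hws
    obtain ⟨T, hT⟩ := parse (w.rotate i).length (w.rotate i) le_rfl hgood
    have hTk : T.internal = k := by
      rw [← count_code T, hT, (List.rotate_perm _ _).count_eq, hcount]
    have hNpos : 0 < n * k + 1 := by omega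
    refine ⟨⟨⟨T, hTk⟩, ⟨(n * k + 1 - i) % (n * k + 1), Nat.mod_lt _ hNpos⟩⟩, ?_⟩
    apply Subtype.ext
    dsimp only
    rw [hT]
    have hrl : (w.rotate i).length = n * k + 1 := by rw [List.length_rotate, hlen]
    calc (w.rotate i).rotate ((n * k + 1 - i) % (n * k + 1))
        = (w.rotate i).rotate (n * k + 1 - i) := by
          have h2 := List.rotate_mod (w.rotate i) (n * k + 1 - i)
          rw [hrl] at h2
          exact h2
      _ = w.rotate (i + (n * k + 1 - i)) := List.rotate_rotate w i _
      _ = w := by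
          rw [show i + (n * k + 1 - i) = n * k + 1 from by omega, ← hlen,
            List.rotate_length]

end NTreeAux

/-- STATEMENT 19: the set of `n`-ary trees with exactly `k` internal nodes is
finite, of cardinality the generalized Catalan number
`C(nk, k) / ((n-1)k + 1)`. -/
theorem card_trees_internal_eq_catalan (n : ℕ) (hn : 2 ≤ n) (k : ℕ) :
    {T : NTree n | NTree.internal T = k}.Finite ∧
      Nat.card {T : NTree n | NTree.internal T = k} * ((n - 1) * k + 1) =
        Nat.choose (n * k) k := by
  set N := n * k + 1 with hN
  have hNpos : 0 < N := by omega
  have hWfin : Finite {l : List Bool // l.length = N ∧ l.count true = k} := by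
    have h1 : {l : List Bool | l.length = N ∧ l.count true = k}.Finite :=
      (List.finite_length_eq Bool N).subset (fun l hl => hl.1)
    exact h1.to_subtype
  have e : {T : NTree n // NTree.internal T = k} × Fin N ≃
      {l : List Bool // l.length = N ∧ l.count true = k} :=
    Equiv.ofBijective _ (NTreeAux.key_bijective (by omega) k)
  have hfinprod : Finite ({T : NTree n // NTree.internal T = k} × Fin N) :=
    Finite.of_equiv _ e.symm
  have hfinS : Finite {T : NTree n // NTree.internal T = k} := by
    have : Function.Injective (fun T : {T : NTree n // NTree.internal T = k} =>
        (T, (⟨0, hNpos⟩ : Fin N))) := fun a b h => (Prod.ext_iff.mp h).1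
    exact Finite.of_injective _ this
  constructor
  · exact Set.finite_coe_iff.mp hfinS
  · have h1 : Nat.card ({T : NTree n // NTree.internal T = k} × Fin N) =
        Nat.card {l : List Bool // l.length = N ∧ l.count true = k} :=
      Nat.card_congr e
    rw [Nat.card_prod, NTreeAux.card_words] at h1
    rw [show Nat.card (Fin N) = N from by simp [Nat.card_eq_fintype_card]] at h1
    set c := Nat.card {T : NTree n // NTree.internal T = k} with hc
    have hcc : Nat.card {T : NTree n | NTree.internal T = k} = c := rfl
    rw [hcc]
    have hkn : k ≤ n * k := Nat.le_mul_of_pos_left k (by omega)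
    have hsub : (n - 1) * k + 1 = n * k + 1 - k := by
      have : (n - 1) * k = n * k - 1 * k := by rw [Nat.sub_mul]
      omega
    apply Nat.eq_of_mul_eq_mul_right (show 0 < N from hNpos)
    calc c * ((n - 1) * k + 1) * N
        = (c * N) * (n * k + 1 - k) := by rw [hsub]; ring
      _ = N.choose k * (n * k + 1 - k) := by rw [h1]
      _ = (n * k).choose k * (n * k + 1) := by
          rw [hN]
          exact (Nat.choose_mul_succ_eq (n * k) k).symm
      _ = (n * k).choose k * N := by rw [hN]
end
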